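/- arXiv:1207.5650 — 13 statements merged into one kernel-verified Lean document; each statement's English description precedes it below -/
import Mathlib

section
/- Let f be differentiable on an open interval containing [a,b] (a < b) with f' integrable on [a,b], let θ, λ ∈ [0,1], q ≥ 1, and set C = (1−λ)a + λb. If |f'|^q is quasi-convex on [a,b], then |(1−θ)(λ f(a) + (1−λ) f(b)) + θ f(C) − (1/(b−a)) ∫_a^b f(x) dx| ≤ (b−a)(θ² − θ + 1/2) [ λ² (max{|f'(a)|^q, |f'(C)|^q})^(1/q) + (1−λ)² (max{|f'(b)|^q, |f'(C)|^q})^(1/q) ]. -/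
open MeasureTheory

lemma aux_abs_int (u v p : ℝ) (h1 : u ≤ p) (h2 : p ≤ v) :
    ∫ x in u..v, |x - p| = ((p-u)^2 + (v-p)^2)/2 := by
  have i1 : IntervalIntegrable (fun x => |x - p|) volume u p :=
    (continuous_abs.comp (continuous_id.sub continuous_const)).intervalIntegrable _ _
  have i2 : IntervalIntegrable (fun x => |x - p|) volume p v :=
    (continuous_abs.comp (continuous_id.sub continuous_const)).intervalIntegrable _ _
  rw [← intervalIntegral.integral_add_adjacent_intervals i1 i2]
  have e1 : (∫ x in u..p, |x - p|) = ∫ x in u..p, (p - x) := by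
    apply intervalIntegral.integral_congr
    intro x hx
    rw [Set.uIcc_of_le h1] at hx
    show |x - p| = p - x
    rw [abs_of_nonpos (by linarith [hx.2] : x - p ≤ 0)]; ring
  have e2 : (∫ x in p..v, |x - p|) = ∫ x in p..v, (x - p) := by
    apply intervalIntegral.integral_congr
    intro x hx
    rw [Set.uIcc_of_le h2] at hx
    show |x - p| = x - p
    rw [abs_of_nonneg (by linarith [hx.1] : 0 ≤ x - p)]
  rw [e1, e2]
  have c1 : IntervalIntegrable (fun x : ℝ => x) volume u p := continuous_id.intervalIntegrable _ _
  have c2 : IntervalIntegrable (fun _ : ℝ => p) volume u p := intervalIntegrable_const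
  rw [intervalIntegral.integral_sub c2 c1]
  simp [integral_id, intervalIntegral.integral_const]
  ring

lemma aux_bnd (f' : ℝ → ℝ) (q : ℝ) (hq : 1 ≤ q) (A B z : ℝ) (hAB : A ≤ B)
    (hz : z ∈ Set.Icc A B)
    (h : ∀ α ∈ Set.Icc (0:ℝ) 1, |f' (α * A + (1-α) * B)| ^ q ≤ max (|f' A|^q) (|f' B|^q)) :
    |f' z| ≤ (max (|f' A|^q) (|f' B|^q)) ^ (1/q) := by
  obtain ⟨α, β, hα, hβ, hs, he⟩ := (Convex.mem_Icc hAB).1 hz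
  have hβ' : β = 1 - α := by linarith
  have hzz : z = α * A + (1 - α) * B := by rw [← he, hβ']
  have hb : |f' z| ^ q ≤ max (|f' A|^q) (|f' B|^q) := by
    rw [hzz]; exact h α ⟨hα, by linarith⟩
  have hq0 : q ≠ 0 := by linarith
  calc |f' z| = (|f' z| ^ q) ^ (1/q) := by
        rw [← Real.rpow_mul (abs_nonneg _), mul_one_div_cancel hq0, Real.rpow_one]
    _ ≤ (max (|f' A|^q) (|f' B|^q)) ^ (1/q) :=
        Real.rpow_le_rpow (Real.rpow_nonneg (abs_nonneg _) q) hb (by positivity)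

lemma aux_piece (f f' : ℝ → ℝ) (u v p M : ℝ) (h1 : u ≤ p) (h2 : p ≤ v)
    (hfc : ContinuousOn f (Set.Icc u v))
    (hder : ∀ x ∈ Set.Ioo u v, HasDerivAt f (f' x) x)
    (hint : IntervalIntegrable f' volume u v)
    (hM : ∀ x ∈ Set.Icc u v, |f' x| ≤ M) :
    |(v - p) * f v - (u - p) * f u - ∫ x in u..v, f x|
      ≤ ((p-u)^2 + (v-p)^2)/2 * M := by
  have huv : u ≤ v := le_trans h1 h2
  have hM0 : 0 ≤ M := le_trans (abs_nonneg _) (hM u ⟨le_refl u, huv⟩)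
  have hibp : ∫ x in u..v, (x - p) * f' x
      = (v - p) * f v - (u - p) * f u - ∫ x in u..v, (1:ℝ) * f x := by
    apply intervalIntegral.integral_mul_deriv_eq_deriv_mul_of_hasDerivAt
      (u := fun x => x - p) (u' := fun _ => (1:ℝ))
    · exact (continuous_id.sub continuous_const).continuousOn
    · rwa [Set.uIcc_of_le huv]
    · intro x hx
      simpa using (hasDerivAt_id x).sub_const p
    · intro x hx
      rw [min_eq_left huv, max_eq_right huv] at hx
      exact hder x hx
    · exact intervalIntegrable_const
    · exact hint
  have hone : (∫ x in u..v, (1:ℝ) * f x) = ∫ x in u..v, f x := by simp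
  rw [hone] at hibp
  rw [← hibp]
  have hb : |∫ x in u..v, (x - p) * f' x| ≤ |∫ x in u..v, |x - p| * M| := by
    rw [← Real.norm_eq_abs (∫ x in u..v, (x - p) * f' x)]
    apply intervalIntegral.norm_integral_le_abs_of_norm_le
    · filter_upwards [ae_restrict_mem measurableSet_uIoc] with t ht
      rw [Set.uIoc_of_le huv] at ht
      have ht' : t ∈ Set.Icc u v := ⟨le_of_lt ht.1, ht.2⟩
      rw [Real.norm_eq_abs, abs_mul]
      exact mul_le_mul_of_nonneg_left (hM t ht') (abs_nonneg _)
    · exact ((continuous_abs.comp (continuous_id.sub continuous_const)).mul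
        continuous_const).intervalIntegrable _ _
  have hval : (∫ x in u..v, |x - p| * M) = ((p-u)^2 + (v-p)^2)/2 * M := by
    rw [intervalIntegral.integral_mul_const, aux_abs_int u v p h1 h2]
  rw [hval] at hb
  calc |∫ x in u..v, (x - p) * f' x|
      ≤ |((p-u)^2 + (v-p)^2)/2 * M| := hb
    _ = ((p-u)^2 + (v-p)^2)/2 * M := abs_of_nonneg (by positivity)

theorem stmt_4 (f f' : ℝ → ℝ) (a b θ lam q c d : ℝ) (hab : a < b)
    (hθ : θ ∈ Set.Icc (0:ℝ) 1) (hlam : lam ∈ Set.Icc (0:ℝ) 1) (hq : 1 ≤ q)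
    (hca : c < a) (hbd : b < d)
    (hf : ∀ x ∈ Set.Ioo c d, HasDerivAt f (f' x) x)
    (hint : IntervalIntegrable f' volume a b)
    (hqc : ∀ x ∈ Set.Icc a b, ∀ y ∈ Set.Icc a b, ∀ α ∈ Set.Icc (0:ℝ) 1,
      |f' (α * x + (1 - α) * y)| ^ q ≤ max (|f' x| ^ q) (|f' y| ^ q)) :
    |(1 - θ) * (lam * f a + (1 - lam) * f b) + θ * f ((1 - lam) * a + lam * b)
        - (1 / (b - a)) * ∫ x in a..b, f x|
      ≤ (b - a) * (θ ^ 2 - θ + 1 / 2) *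
          (lam ^ 2 * (max (|f' a| ^ q) (|f' ((1 - lam) * a + lam * b)| ^ q)) ^ (1 / q)
            + (1 - lam) ^ 2 * (max (|f' b| ^ q) (|f' ((1 - lam) * a + lam * b)| ^ q)) ^ (1 / q)) := by
  obtain ⟨hθ0, hθ1⟩ := hθ
  obtain ⟨hl0, hl1⟩ := hlam
  set C : ℝ := (1 - lam) * a + lam * b with hCdef
  have hba : (0:ℝ) < b - a := by linarith
  have haC : a ≤ C := by nlinarith
  have hCb : C ≤ b := by nlinarith
  set p₁ : ℝ := a + (1 - θ) * lam * (b - a) with hp₁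
  set p₂ : ℝ := b - (1 - θ) * (1 - lam) * (b - a) with hp₂
  have hap1 : a ≤ p₁ := by nlinarith
  have hp1C : p₁ ≤ C := by nlinarith
  have hCp2 : C ≤ p₂ := by nlinarith
  have hp2b : p₂ ≤ b := by nlinarith
  -- memberships
  have hmemIcc : Set.Icc a b ⊆ Set.Ioo c d := fun x hx =>
    ⟨lt_of_lt_of_le hca hx.1, lt_of_le_of_lt hx.2 hbd⟩
  have hfc : ContinuousOn f (Set.Icc a b) := fun x hx =>
    ((hf x (hmemIcc hx)).continuousAt).continuousWithinAt
  have haM : a ∈ Set.Icc a b := ⟨le_refl a, hab.le⟩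
  have hbM : b ∈ Set.Icc a b := ⟨hab.le, le_refl b⟩
  have hCM : C ∈ Set.Icc a b := ⟨haC, hCb⟩
  -- bounds on |f'|
  set M₁ : ℝ := (max (|f' a| ^ q) (|f' C| ^ q)) ^ (1/q) with hM₁
  set M₂ : ℝ := (max (|f' b| ^ q) (|f' C| ^ q)) ^ (1/q) with hM₂
  have hbnd1 : ∀ x ∈ Set.Icc a C, |f' x| ≤ M₁ := fun x hx =>
    aux_bnd f' q hq a C x haC hx (fun α hα => hqc a haM C hCM α hα)
  have hbnd2 : ∀ x ∈ Set.Icc C b, |f' x| ≤ M₂ := by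
    intro x hx
    rw [hM₂, max_comm]
    exact aux_bnd f' q hq C b x hCb hx (fun α hα => hqc C hCM b hbM α hα)
  -- integrability of f' on subintervals
  have hi1 : IntervalIntegrable f' volume a C := hint.mono_set (by
    rw [Set.uIcc_of_le haC, Set.uIcc_of_le hab.le]
    exact Set.Icc_subset_Icc_right hCb)
  have hi2 : IntervalIntegrable f' volume C b := hint.mono_set (by
    rw [Set.uIcc_of_le hCb, Set.uIcc_of_le hab.le]
    exact Set.Icc_subset_Icc_left haC)
  -- integrability of f
  have hfi1 : IntervalIntegrable f volume a C := by
    apply ContinuousOn.intervalIntegrable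
    rw [Set.uIcc_of_le haC]
    exact hfc.mono (Set.Icc_subset_Icc_right hCb)
  have hfi2 : IntervalIntegrable f volume C b := by
    apply ContinuousOn.intervalIntegrable
    rw [Set.uIcc_of_le hCb]
    exact hfc.mono (Set.Icc_subset_Icc_left haC)
  -- piece bounds
  have hP1 : |(C - p₁) * f C - (a - p₁) * f a - ∫ x in a..C, f x|
      ≤ ((p₁-a)^2 + (C-p₁)^2)/2 * M₁ :=
    aux_piece f f' a C p₁ M₁ hap1 hp1C (hfc.mono (Set.Icc_subset_Icc_right hCb))
      (fun x hx => hf x (hmemIcc ⟨hx.1.le, le_trans hx.2.le hCb⟩)) hi1 hbnd1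
  have hP2 : |(b - p₂) * f b - (C - p₂) * f C - ∫ x in C..b, f x|
      ≤ ((p₂-C)^2 + (b-p₂)^2)/2 * M₂ :=
    aux_piece f f' C b p₂ M₂ hCp2 hp2b (hfc.mono (Set.Icc_subset_Icc_left haC))
      (fun x hx => hf x (hmemIcc ⟨le_trans haC hx.1.le, hx.2.le⟩)) hi2 hbnd2
  -- split integral
  have hsplit : (∫ x in a..b, f x) = (∫ x in a..C, f x) + ∫ x in C..b, f x :=
    (intervalIntegral.integral_add_adjacent_intervals hfi1 hfi2).symm
  -- main identity
  have hE : (1 - θ) * (lam * f a + (1 - lam) * f b) + θ * f C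
      - (1 / (b - a)) * ∫ x in a..b, f x
      = (1 / (b - a)) * (((C - p₁) * f C - (a - p₁) * f a - ∫ x in a..C, f x)
        + ((b - p₂) * f b - (C - p₂) * f C - ∫ x in C..b, f x)) := by
    rw [hsplit]
    field_simp
    rw [hp₁, hp₂]; ring
  rw [hE]
  have hM10 : 0 ≤ M₁ := Real.rpow_nonneg (le_max_iff.2 (Or.inl (Real.rpow_nonneg (abs_nonneg _) q))) _
  have hM20 : 0 ≤ M₂ := Real.rpow_nonneg (le_max_iff.2 (Or.inl (Real.rpow_nonneg (abs_nonneg _) q))) _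
  have habs : |(1 / (b - a)) * (((C - p₁) * f C - (a - p₁) * f a - ∫ x in a..C, f x)
        + ((b - p₂) * f b - (C - p₂) * f C - ∫ x in C..b, f x))|
      ≤ (1 / (b - a)) * (((p₁-a)^2 + (C-p₁)^2)/2 * M₁ + ((p₂-C)^2 + (b-p₂)^2)/2 * M₂) := by
    rw [abs_mul, abs_of_nonneg (by positivity : (0:ℝ) ≤ 1 / (b - a))]
    apply mul_le_mul_of_nonneg_left _ (by positivity)
    exact le_trans (abs_add_le _ _) (add_le_add hP1 hP2)
  refine le_trans habs (le_of_eq ?_)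
  have e1 : (p₁ - a)^2 + (C - p₁)^2 = lam^2 * (b-a)^2 * (2*θ^2 - 2*θ + 1) := by
    rw [hp₁, hCdef]; ring
  have e2 : (p₂ - C)^2 + (b - p₂)^2 = (1-lam)^2 * (b-a)^2 * (2*θ^2 - 2*θ + 1) := by
    rw [hp₂, hCdef]; ring
  rw [e1, e2]
  field_simp
end

section
/- Let f be differentiable on an open interval containing [a,b] (a < b) with f' integrable, let θ, λ ∈ [0,1], and suppose |f'| is quasi-convex on [a,b]. With C = (1−λ)a + λb, we have |(1−θ)(λ f(a) + (1−λ) f(b)) + θ f(C) − (1/(b−a)) ∫_a^b f(x) dx| ≤ (b−a)(θ² − θ + 1/2) [ λ² max{|f'(a)|, |f'(C)|} + (1−λ)² max{|f'(b)|, |f'(C)|} ]. -/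
open MeasureTheory

lemma integral_abs_sub_aux (u v s : ℝ) (hus : u ≤ s) (hsv : s ≤ v) :
    ∫ x in u..v, |x - s| = ((s - u) ^ 2 + (v - s) ^ 2) / 2 := by
  have hia : IntervalIntegrable (fun x : ℝ => |x - s|) volume u s :=
    ((continuous_id.sub continuous_const).abs).intervalIntegrable u s
  have hib : IntervalIntegrable (fun x : ℝ => |x - s|) volume s v :=
    ((continuous_id.sub continuous_const).abs).intervalIntegrable s v
  have h1 : ∫ x in u..s, |x - s| = (s - u) ^ 2 / 2 := by
    have hcong : ∫ x in u..s, |x - s| = ∫ x in u..s, (s - x) := by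
      apply intervalIntegral.integral_congr
      intro x hx
      rw [Set.uIcc_of_le hus] at hx
      obtain ⟨h1, h2⟩ := hx
      show |x - s| = s - x
      rw [abs_sub_comm]
      exact abs_of_nonneg (by linarith)
    rw [hcong, intervalIntegral.integral_sub intervalIntegrable_const
      intervalIntegral.intervalIntegrable_id, intervalIntegral.integral_const, integral_id,
      smul_eq_mul]
    ring
  have h2 : ∫ x in s..v, |x - s| = (v - s) ^ 2 / 2 := by
    have hcong : ∫ x in s..v, |x - s| = ∫ x in s..v, (x - s) := by
      apply intervalIntegral.integral_congr
      intro x hx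
      rw [Set.uIcc_of_le hsv] at hx
      obtain ⟨h1, h2⟩ := hx
      show |x - s| = x - s
      exact abs_of_nonneg (by linarith)
    rw [hcong, intervalIntegral.integral_sub intervalIntegral.intervalIntegrable_id
      intervalIntegrable_const, intervalIntegral.integral_const, integral_id,
      smul_eq_mul]
    ring
  rw [← intervalIntegral.integral_add_adjacent_intervals hia hib, h1, h2]
  ring

lemma kernel_bound (f f' : ℝ → ℝ) (u v s M : ℝ) (hus : u ≤ s) (hsv : s ≤ v)
    (hd : ∀ x ∈ Set.Icc u v, HasDerivAt f (f' x) x)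
    (hi : IntervalIntegrable f' volume u v)
    (hM : ∀ x ∈ Set.Icc u v, |f' x| ≤ M) :
    |(v - s) * f v - (u - s) * f u - ∫ x in u..v, f x|
      ≤ M * (((s - u) ^ 2 + (v - s) ^ 2) / 2) := by
  have huv : u ≤ v := hus.trans hsv
  have hM0 : 0 ≤ M := (abs_nonneg _).trans (hM u ⟨le_rfl, huv⟩)
  have hibp : ∫ x in u..v, (x - s) * f' x
      = (v - s) * f v - (u - s) * f u - ∫ x in u..v, f x := by
    have h := intervalIntegral.integral_mul_deriv_eq_deriv_mul
      (u := fun x => x - s) (u' := fun _ => (1 : ℝ)) (v := f) (v' := f')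
      (fun x _ => (hasDerivAt_id x).sub_const s)
      (fun x hx => hd x (by rwa [Set.uIcc_of_le huv] at hx))
      intervalIntegrable_const hi
    simpa using h
  rw [← hibp]
  have hae : ∀ᵐ t ∂(volume.restrict (Set.uIoc u v)),
      ‖(t - s) * f' t‖ ≤ M * abs (t - s) := by
    rw [Set.uIoc_of_le huv]
    refine (ae_restrict_iff' measurableSet_Ioc).2 (ae_of_all _ fun t ht => ?_)
    have hb := hM t ⟨ht.1.le, ht.2⟩
    have heq : ‖(t - s) * f' t‖ = abs (t - s) * abs (f' t) := abs_mul _ _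
    rw [heq, mul_comm M]
    exact mul_le_mul_of_nonneg_left hb (abs_nonneg _)
  have hbound : IntervalIntegrable (fun x : ℝ => M * abs (x - s)) volume u v :=
    (continuous_const.mul ((continuous_id.sub continuous_const).abs)).intervalIntegrable u v
  have hle := intervalIntegral.norm_integral_le_abs_of_norm_le
    (μ := volume) (a := u) (b := v) (f := fun x => (x - s) * f' x)
    (g := fun x => M * abs (x - s)) hae hbound
  rw [Real.norm_eq_abs] at hle
  refine hle.trans (le_of_eq ?_)
  rw [intervalIntegral.integral_const_mul]
  have hval : (∫ x in u..v, abs (x - s)) = ((s - u) ^ 2 + (v - s) ^ 2) / 2 :=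
    integral_abs_sub_aux u v s hus hsv
  rw [hval]
  have h0 : 0 ≤ ((s - u) ^ 2 + (v - s) ^ 2) / 2 := by positivity
  rw [abs_of_nonneg (mul_nonneg hM0 h0)]

lemma qc_bound (f' : ℝ → ℝ) (a b : ℝ)
    (hqc : ∀ x ∈ Set.Icc a b, ∀ y ∈ Set.Icc a b, ∀ α ∈ Set.Icc (0:ℝ) 1,
      |f' (α * x + (1 - α) * y)| ≤ max |f' x| |f' y|)
    (u v : ℝ) (hu : u ∈ Set.Icc a b) (hv : v ∈ Set.Icc a b) (huv : u ≤ v)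
    (x : ℝ) (hx : x ∈ Set.Icc u v) : |f' x| ≤ max |f' u| |f' v| := by
  rcases eq_or_lt_of_le huv with rfl | hlt
  · have hxu : x = u := le_antisymm hx.2 hx.1
    subst hxu
    exact le_max_left _ _
  · set α := (v - x) / (v - u) with hα
    have hvu : (0:ℝ) < v - u := by linarith
    have hα0 : 0 ≤ α := div_nonneg (by linarith [hx.2]) hvu.le
    have hα1 : α ≤ 1 := by
      rw [hα, div_le_one hvu]; linarith [hx.1]
    have h1 : α * (v - u) = v - x := div_mul_cancel₀ _ (ne_of_gt hvu)
    have hcomb : α * u + (1 - α) * v = x := by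
      have : α * u + (1 - α) * v = v - α * (v - u) := by ring
      rw [this, h1]; ring
    calc |f' x| = |f' (α * u + (1 - α) * v)| := by rw [hcomb]
      _ ≤ max |f' u| |f' v| := hqc u hu v hv α ⟨hα0, hα1⟩

theorem stmt_5 (f f' : ℝ → ℝ) (a b θ lam c d : ℝ) (hab : a < b)
    (hθ : θ ∈ Set.Icc (0:ℝ) 1) (hlam : lam ∈ Set.Icc (0:ℝ) 1)
    (hca : c < a) (hbd : b < d)
    (hf : ∀ x ∈ Set.Ioo c d, HasDerivAt f (f' x) x)
    (hint : IntervalIntegrable f' volume a b)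
    (hqc : ∀ x ∈ Set.Icc a b, ∀ y ∈ Set.Icc a b, ∀ α ∈ Set.Icc (0:ℝ) 1,
      |f' (α * x + (1 - α) * y)| ≤ max |f' x| |f' y|) :
    |(1 - θ) * (lam * f a + (1 - lam) * f b) + θ * f ((1 - lam) * a + lam * b)
        - (1 / (b - a)) * ∫ x in a..b, f x|
      ≤ (b - a) * (θ ^ 2 - θ + 1 / 2) *
          (lam ^ 2 * max (|f' a|) (|f' ((1 - lam) * a + lam * b)|)
            + (1 - lam) ^ 2 * max (|f' b|) (|f' ((1 - lam) * a + lam * b)|)) := by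
  obtain ⟨hθ0, hθ1⟩ := hθ
  obtain ⟨hl0, hl1⟩ := hlam
  set C : ℝ := (1 - lam) * a + lam * b with hC
  have haC : a ≤ C := by nlinarith
  have hCb : C ≤ b := by nlinarith
  set s1 : ℝ := θ * a + (1 - θ) * C with hs1
  set s2 : ℝ := (1 - θ) * C + θ * b with hs2
  have has1 : a ≤ s1 := by nlinarith
  have hs1C : s1 ≤ C := by nlinarith
  have hCs2 : C ≤ s2 := by nlinarith
  have hs2b : s2 ≤ b := by nlinarith
  have hsub1 : Set.Icc a C ⊆ Set.Ioo c d := fun x hx =>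
    ⟨lt_of_lt_of_le hca hx.1, lt_of_le_of_lt (hx.2.trans hCb) hbd⟩
  have hsub2 : Set.Icc C b ⊆ Set.Ioo c d := fun x hx =>
    ⟨lt_of_lt_of_le hca (haC.trans hx.1), lt_of_le_of_lt hx.2 hbd⟩
  set M1 : ℝ := max |f' a| |f' C| with hM1def
  set M2 : ℝ := max |f' b| |f' C| with hM2def
  have hM1 : ∀ x ∈ Set.Icc a C, |f' x| ≤ M1 :=
    fun x hx => qc_bound f' a b hqc a C ⟨le_rfl, hab.le⟩ ⟨haC, hCb⟩ haC x hx
  have hM2 : ∀ x ∈ Set.Icc C b, |f' x| ≤ M2 := by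
    intro x hx
    have := qc_bound f' a b hqc C b ⟨haC, hCb⟩ ⟨hab.le, le_rfl⟩ hCb x hx
    rwa [max_comm] at this
  have hi1 : IntervalIntegrable f' volume a C := by
    apply hint.mono_set
    rw [Set.uIcc_of_le haC, Set.uIcc_of_le hab.le]
    exact Set.Icc_subset_Icc le_rfl hCb
  have hi2 : IntervalIntegrable f' volume C b := by
    apply hint.mono_set
    rw [Set.uIcc_of_le hCb, Set.uIcc_of_le hab.le]
    exact Set.Icc_subset_Icc haC le_rfl
  have B1 := kernel_bound f f' a C s1 M1 has1 hs1C
    (fun x hx => hf x (hsub1 hx)) hi1 hM1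
  have B2 := kernel_bound f f' C b s2 M2 hCs2 hs2b
    (fun x hx => hf x (hsub2 hx)) hi2 hM2
  have hfc1 : IntervalIntegrable f volume a C := by
    apply ContinuousOn.intervalIntegrable
    rw [Set.uIcc_of_le haC]
    exact fun x hx => ((hf x (hsub1 hx)).continuousAt).continuousWithinAt
  have hfc2 : IntervalIntegrable f volume C b := by
    apply ContinuousOn.intervalIntegrable
    rw [Set.uIcc_of_le hCb]
    exact fun x hx => ((hf x (hsub2 hx)).continuousAt).continuousWithinAt
  have hsum : (∫ x in a..C, f x) + ∫ x in C..b, f x = ∫ x in a..b, f x :=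
    intervalIntegral.integral_add_adjacent_intervals hfc1 hfc2
  set T1 : ℝ := (C - s1) * f C - (a - s1) * f a - ∫ x in a..C, f x with hT1
  set T2 : ℝ := (b - s2) * f b - (C - s2) * f C - ∫ x in C..b, f x with hT2
  have hba : (0:ℝ) < b - a := by linarith
  have hE : (1 - θ) * (lam * f a + (1 - lam) * f b) + θ * f ((1 - lam) * a + lam * b)
      - (1 / (b - a)) * ∫ x in a..b, f x = (T1 + T2) / (b - a) := by
    rw [← hsum, hT1, hT2, hs1, hs2, hC]
    field_simp
    ring
  rw [hE, abs_div, abs_of_pos hba, div_le_iff₀ hba]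
  have habs : |T1 + T2| ≤ M1 * (((s1 - a) ^ 2 + (C - s1) ^ 2) / 2)
      + M2 * (((s2 - C) ^ 2 + (b - s2) ^ 2) / 2) :=
    (abs_add_le _ _).trans (add_le_add B1 B2)
  refine habs.trans (le_of_eq ?_)
  rw [hs1, hs2, hC]
  ring
end

section
/- Let f be differentiable on an open interval containing [a,b] (a < b) with f' integrable, q ≥ 1, and suppose |f'|^q is quasi-convex on [a,b]. Then the Simpson-type inequality holds: |(1/6)[f(a) + 4 f((a+b)/2) + f(b)] − (1/(b−a)) ∫_a^b f(x) dx| ≤ (5(b−a)/72) [ (max{|f'(a)|^q, |f'((a+b)/2)|^q})^(1/q) + (max{|f'(b)|^q, |f'((a+b)/2)|^q})^(1/q) ]. -/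
open MeasureTheory

private lemma ptwise (f' : ℝ → ℝ) (a b q u v : ℝ) (hq : 1 ≤ q)
    (hu : u ∈ Set.Icc a b) (hv : v ∈ Set.Icc a b) (huv : u < v)
    (hqc : ∀ x ∈ Set.Icc a b, ∀ y ∈ Set.Icc a b, ∀ α ∈ Set.Icc (0:ℝ) 1,
      |f' (α * x + (1 - α) * y)| ^ q ≤ max (|f' x| ^ q) (|f' y| ^ q)) :
    ∀ x ∈ Set.Icc u v, |f' x| ≤ (max (|f' u| ^ q) (|f' v| ^ q)) ^ (1 / q) := by
  intro x hx
  have hq0 : q ≠ 0 := by linarith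
  have hd : (0:ℝ) < v - u := by linarith
  set α := (v - x) / (v - u) with hα
  have hα0 : 0 ≤ α := div_nonneg (by linarith [hx.2]) hd.le
  have hα1 : α ≤ 1 := by rw [hα, div_le_one hd]; linarith [hx.1]
  have hxeq : α * u + (1 - α) * v = x := by
    rw [hα]; field_simp; ring
  have h1 := hqc u hu v hv α ⟨hα0, hα1⟩
  rw [hxeq] at h1
  have h2 : |f' x| = (|f' x| ^ q) ^ (1/q) := by
    rw [← Real.rpow_mul (abs_nonneg _), mul_one_div_cancel hq0, Real.rpow_one]
  rw [h2]
  exact Real.rpow_le_rpow (Real.rpow_nonneg (abs_nonneg _) _) h1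
    (one_div_nonneg.mpr (by linarith))

private lemma abs_int (u v c : ℝ) (h1 : u ≤ c) (h2 : c ≤ v) :
    ∫ x in u..v, |x - c| = (c - u)^2 / 2 + (v - c)^2 / 2 := by
  have hi : ∀ s t : ℝ, ∫ x in s..t, (x - c) = (t - c)^2/2 - (s - c)^2/2 := by
    intro s t
    have h : ∫ x in s..t, (x - c) = (∫ x in s..t, x) - ∫ x in s..t, (c:ℝ) :=
      intervalIntegral.integral_sub (continuous_id.intervalIntegrable _ _) intervalIntegrable_const
    rw [h, integral_id, intervalIntegral.integral_const, smul_eq_mul]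
    ring
  have hsplit : (∫ x in u..c, |x - c|) + ∫ x in c..v, |x - c| = ∫ x in u..v, |x - c| := by
    apply intervalIntegral.integral_add_adjacent_intervals <;>
      exact (Continuous.intervalIntegrable (by continuity) _ _)
  rw [← hsplit]
  have e1 : ∫ x in u..c, |x - c| = ∫ x in u..c, (c - x) := by
    apply intervalIntegral.integral_congr
    intro x hx
    rw [Set.uIcc_of_le h1] at hx
    show |x - c| = c - x
    rw [abs_of_nonpos (by linarith [hx.2])]; ring
  have e2 : ∫ x in c..v, |x - c| = ∫ x in c..v, (x - c) := by
    apply intervalIntegral.integral_congr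
    intro x hx
    rw [Set.uIcc_of_le h2] at hx
    show |x - c| = x - c
    exact abs_of_nonneg (by linarith [hx.1])
  have e1' : ∫ x in u..c, (c - x) = - ∫ x in u..c, (x - c) := by
    rw [← intervalIntegral.integral_neg]
    congr 1; funext x; ring
  rw [e1, e2, e1', hi, hi]; ring
theorem stmt_6 (f f' : ℝ → ℝ) (a b q c d : ℝ) (hab : a < b) (hq : 1 ≤ q)
    (hca : c < a) (hbd : b < d)
    (hf : ∀ x ∈ Set.Ioo c d, HasDerivAt f (f' x) x)
    (hint : IntervalIntegrable f' volume a b)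
    (hqc : ∀ x ∈ Set.Icc a b, ∀ y ∈ Set.Icc a b, ∀ α ∈ Set.Icc (0:ℝ) 1,
      |f' (α * x + (1 - α) * y)| ^ q ≤ max (|f' x| ^ q) (|f' y| ^ q)) :
    |(1 / 6) * (f a + 4 * f ((a + b) / 2) + f b) - (1 / (b - a)) * ∫ x in a..b, f x|
      ≤ 5 * (b - a) / 72 *
          ((max (|f' a| ^ q) (|f' ((a + b) / 2)| ^ q)) ^ (1 / q)
            + (max (|f' b| ^ q) (|f' ((a + b) / 2)| ^ q)) ^ (1 / q)) := by
  set m : ℝ := (a + b) / 2 with hm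
  have ham : a < m := by rw [hm]; linarith
  have hmb : m < b := by rw [hm]; linarith
  set p : ℝ := (5 * a + b) / 6 with hp
  set r : ℝ := (a + 5 * b) / 6 with hr
  have hap : a ≤ p := by rw [hp]; linarith
  have hpm : p ≤ m := by rw [hp, hm]; linarith
  have hmr : m ≤ r := by rw [hr, hm]; linarith
  have hrb : r ≤ b := by rw [hr]; linarith
  have hsub : Set.Icc a b ⊆ Set.Ioo c d := fun x hx => ⟨lt_of_lt_of_le hca hx.1, lt_of_le_of_lt hx.2 hbd⟩
  have hderiv : ∀ x ∈ Set.Icc a b, HasDerivAt f (f' x) x := fun x hx => hf x (hsub hx)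
  -- integrability
  have hint1 : IntervalIntegrable f' volume a m := by
    apply hint.mono_set
    rw [Set.uIcc_of_le ham.le, Set.uIcc_of_le hab.le]
    exact Set.Icc_subset_Icc le_rfl hmb.le
  have hint2 : IntervalIntegrable f' volume m b := by
    apply hint.mono_set
    rw [Set.uIcc_of_le hmb.le, Set.uIcc_of_le hab.le]
    exact Set.Icc_subset_Icc ham.le le_rfl
  have hfc : ContinuousOn f (Set.Icc a b) := fun x hx =>
    ((hderiv x hx).continuousAt).continuousWithinAt
  have hfint1 : IntervalIntegrable f volume a m := by
    apply ContinuousOn.intervalIntegrable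
    rw [Set.uIcc_of_le ham.le]
    exact hfc.mono (Set.Icc_subset_Icc le_rfl hmb.le)
  have hfint2 : IntervalIntegrable f volume m b := by
    apply ContinuousOn.intervalIntegrable
    rw [Set.uIcc_of_le hmb.le]
    exact hfc.mono (Set.Icc_subset_Icc ham.le le_rfl)
  -- integration by parts on each half
  have hparts1 : ∫ x in a..m, (x - p) * f' x
      = (m - p) * f m - (a - p) * f a - ∫ x in a..m, f x := by
    have h := intervalIntegral.integral_mul_deriv_eq_deriv_mul
      (u := fun x => x - p) (u' := fun _ => (1:ℝ)) (v := f) (v' := f')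
      (fun x _ => (hasDerivAt_id x).sub_const p)
      (fun x hx => hderiv x (by
        rw [Set.uIcc_of_le ham.le] at hx
        exact ⟨hx.1, hx.2.trans hmb.le⟩))
      intervalIntegrable_const hint1
    simpa using h
  have hparts2 : ∫ x in m..b, (x - r) * f' x
      = (b - r) * f b - (m - r) * f m - ∫ x in m..b, f x := by
    have h := intervalIntegral.integral_mul_deriv_eq_deriv_mul
      (u := fun x => x - r) (u' := fun _ => (1:ℝ)) (v := f) (v' := f')
      (fun x _ => (hasDerivAt_id x).sub_const r)
      (fun x hx => hderiv x (by
        rw [Set.uIcc_of_le hmb.le] at hx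
        exact ⟨ham.le.trans hx.1, hx.2⟩))
      intervalIntegrable_const hint2
    simpa using h
  have hadj : (∫ x in a..m, f x) + ∫ x in m..b, f x = ∫ x in a..b, f x :=
    intervalIntegral.integral_add_adjacent_intervals hfint1 hfint2
  set I1 : ℝ := ∫ x in a..m, (x - p) * f' x with hI1
  set I2 : ℝ := ∫ x in m..b, (x - r) * f' x with hI2
  have hba : b - a ≠ 0 := by linarith
  have key : (1 / 6) * (f a + 4 * f m + f b) - (1 / (b - a)) * ∫ x in a..b, f x
      = (1 / (b - a)) * (I1 + I2) := by
    rw [hparts1, hparts2, ← hadj]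
    field_simp
    rw [hm, hp, hr]
    ring
  -- bounds
  set M1 : ℝ := (max (|f' a| ^ q) (|f' m| ^ q)) ^ (1 / q) with hM1
  set M2 : ℝ := (max (|f' b| ^ q) (|f' m| ^ q)) ^ (1 / q) with hM2
  have hM1nn : 0 ≤ M1 := Real.rpow_nonneg (le_max_of_le_left (Real.rpow_nonneg (abs_nonneg _) _)) _
  have hM2nn : 0 ≤ M2 := Real.rpow_nonneg (le_max_of_le_left (Real.rpow_nonneg (abs_nonneg _) _)) _
  have hpt1 : ∀ x ∈ Set.Icc a m, |f' x| ≤ M1 :=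
    ptwise f' a b q a m hq ⟨le_rfl, hab.le⟩ ⟨ham.le, hmb.le⟩ ham hqc
  have hpt2 : ∀ x ∈ Set.Icc m b, |f' x| ≤ M2 := by
    intro x hx
    have h := ptwise f' a b q m b hq ⟨ham.le, hmb.le⟩ ⟨hab.le, le_rfl⟩ hmb hqc x hx
    rw [hM2, max_comm]
    exact h
  have hbd1 : |I1| ≤ M1 * (5 * (b - a) ^ 2 / 72) := by
    have hb : IntervalIntegrable (fun x => |x - p| * M1) volume a m :=
      (Continuous.intervalIntegrable (((continuous_id.sub continuous_const).abs).mul continuous_const) _ _)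
    have hae : ∀ᵐ t ∂(volume.restrict (Set.uIoc a m)),
        ‖(t - p) * f' t‖ ≤ |t - p| * M1 := by
      filter_upwards [MeasureTheory.ae_restrict_mem measurableSet_uIoc] with x hx
      have hx' : x ∈ Set.Icc a m := by
        rw [Set.uIoc_of_le ham.le] at hx
        exact ⟨hx.1.le, hx.2⟩
      rw [Real.norm_eq_abs, abs_mul]
      exact mul_le_mul_of_nonneg_left (hpt1 x hx') (abs_nonneg _)
    have h := intervalIntegral.norm_integral_le_abs_of_norm_le hae hb
    have hcomp : ∫ x in a..m, |x - p| * M1 = M1 * (5 * (b - a) ^ 2 / 72) := by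
      rw [intervalIntegral.integral_mul_const, abs_int a m p hap hpm]
      rw [hp, hm]; ring
    calc |I1| ≤ |∫ x in a..m, |x - p| * M1| := h
      _ = M1 * (5 * (b - a) ^ 2 / 72) := by
          rw [hcomp, abs_of_nonneg (by positivity)]
  have hbd2 : |I2| ≤ M2 * (5 * (b - a) ^ 2 / 72) := by
    have hb : IntervalIntegrable (fun x => |x - r| * M2) volume m b :=
      (Continuous.intervalIntegrable (((continuous_id.sub continuous_const).abs).mul continuous_const) _ _)
    have hae : ∀ᵐ t ∂(volume.restrict (Set.uIoc m b)),
        ‖(t - r) * f' t‖ ≤ |t - r| * M2 := by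
      filter_upwards [MeasureTheory.ae_restrict_mem measurableSet_uIoc] with x hx
      have hx' : x ∈ Set.Icc m b := by
        rw [Set.uIoc_of_le hmb.le] at hx
        exact ⟨hx.1.le, hx.2⟩
      rw [Real.norm_eq_abs, abs_mul]
      exact mul_le_mul_of_nonneg_left (hpt2 x hx') (abs_nonneg _)
    have h := intervalIntegral.norm_integral_le_abs_of_norm_le hae hb
    have hcomp : ∫ x in m..b, |x - r| * M2 = M2 * (5 * (b - a) ^ 2 / 72) := by
      rw [intervalIntegral.integral_mul_const, abs_int m b r hmr hrb]
      rw [hr, hm]; ring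
    calc |I2| ≤ |∫ x in m..b, |x - r| * M2| := h
      _ = M2 * (5 * (b - a) ^ 2 / 72) := by
          rw [hcomp, abs_of_nonneg (by positivity)]
  have hpos : (0:ℝ) < 1 / (b - a) := div_pos one_pos (by linarith)
  rw [key, abs_mul, abs_of_nonneg hpos.le]
  have habs : |I1 + I2| ≤ (M1 + M2) * (5 * (b - a) ^ 2 / 72) := by
    calc |I1 + I2| ≤ |I1| + |I2| := abs_add_le _ _
      _ ≤ (M1 + M2) * (5 * (b - a) ^ 2 / 72) := by linarith
  calc (1 / (b - a)) * |I1 + I2|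
      ≤ (1 / (b - a)) * ((M1 + M2) * (5 * (b - a) ^ 2 / 72)) := by
        exact mul_le_mul_of_nonneg_left habs hpos.le
    _ = 5 * (b - a) / 72 * (M1 + M2) := by field_simp
end

section
/- Let f be differentiable on an open interval containing [a,b] (a < b) with f' integrable, q ≥ 1, and suppose |f'|^q is quasi-convex on [a,b]. Then the midpoint inequality holds: |f((a+b)/2) − (1/(b−a)) ∫_a^b f(x) dx| ≤ ((b−a)/8) [ (max{|f'(a)|^q, |f'((a+b)/2)|^q})^(1/q) + (max{|f'(b)|^q, |f'((a+b)/2)|^q})^(1/q) ]. -/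
open MeasureTheory

theorem stmt_7 (f f' : ℝ → ℝ) (a b q c d : ℝ) (hab : a < b) (hq : 1 ≤ q)
    (hca : c < a) (hbd : b < d)
    (hf : ∀ x ∈ Set.Ioo c d, HasDerivAt f (f' x) x)
    (hint : IntervalIntegrable f' volume a b)
    (hqc : ∀ x ∈ Set.Icc a b, ∀ y ∈ Set.Icc a b, ∀ α ∈ Set.Icc (0:ℝ) 1,
      |f' (α * x + (1 - α) * y)| ^ q ≤ max (|f' x| ^ q) (|f' y| ^ q)) :
    |f ((a + b) / 2) - (1 / (b - a)) * ∫ x in a..b, f x|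
      ≤ (b - a) / 8 *
          ((max (|f' a| ^ q) (|f' ((a + b) / 2)| ^ q)) ^ (1 / q)
            + (max (|f' b| ^ q) (|f' ((a + b) / 2)| ^ q)) ^ (1 / q)) := by
  have hq0 : (0:ℝ) < q := lt_of_lt_of_le one_pos hq
  set m : ℝ := (a + b) / 2 with hmdef
  have ham : a < m := by simp only [hmdef]; linarith
  have hmb : m < b := by simp only [hmdef]; linarith
  have hsub : Set.Icc a b ⊆ Set.Ioo c d := fun x hx =>
    ⟨lt_of_lt_of_le hca hx.1, lt_of_le_of_lt hx.2 hbd⟩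
  -- key pointwise bound
  have key : ∀ x ∈ Set.Icc a b, ∀ y ∈ Set.Icc a b, ∀ t ∈ Set.Icc x y,
      |f' t| ≤ (max (|f' x| ^ q) (|f' y| ^ q)) ^ (1 / q) := by
    intro x hx y hy t ht
    have hxy : x ≤ y := le_trans ht.1 ht.2
    have hM : |f' t| ^ q ≤ max (|f' x| ^ q) (|f' y| ^ q) := by
      rcases eq_or_lt_of_le hxy with h | h
      · have ht' : t = x := le_antisymm (h ▸ ht.2) ht.1
        rw [ht']; exact le_max_left _ _
      · set α : ℝ := (y - t) / (y - x) with hα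
        have hne : y - x ≠ 0 := sub_ne_zero.mpr (ne_of_gt h)
        have hα0 : 0 ≤ α := div_nonneg (by linarith [ht.2]) (by linarith)
        have hα1 : α ≤ 1 := by
          rw [div_le_one (by linarith)]; linarith [ht.1]
        have heq : α * x + (1 - α) * y = t := by
          rw [hα, div_mul_eq_mul_div, one_sub_div hne, div_mul_eq_mul_div, ← add_div, div_eq_iff hne]; ring
        have := hqc x hx y hy α ⟨hα0, hα1⟩
        rwa [heq] at this
    calc |f' t| = (|f' t| ^ q) ^ (1 / q) := by
          rw [← Real.rpow_mul (abs_nonneg _), mul_one_div_cancel hq0.ne', Real.rpow_one]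
      _ ≤ (max (|f' x| ^ q) (|f' y| ^ q)) ^ (1 / q) :=
          Real.rpow_le_rpow (Real.rpow_nonneg (abs_nonneg _) _) hM (by positivity)
  have haI : a ∈ Set.Icc a b := ⟨le_refl _, hab.le⟩
  have hbI : b ∈ Set.Icc a b := ⟨hab.le, le_refl _⟩
  have hmI : m ∈ Set.Icc a b := ⟨ham.le, hmb.le⟩
  set M1 : ℝ := (max (|f' a| ^ q) (|f' m| ^ q)) ^ (1 / q) with hM1
  set M2 : ℝ := (max (|f' b| ^ q) (|f' m| ^ q)) ^ (1 / q) with hM2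
  have hM1nn : 0 ≤ M1 := Real.rpow_nonneg (le_max_of_le_left (Real.rpow_nonneg (abs_nonneg _) _)) _
  have hM2nn : 0 ≤ M2 := Real.rpow_nonneg (le_max_of_le_left (Real.rpow_nonneg (abs_nonneg _) _)) _
  have bd1 : ∀ t ∈ Set.Icc a m, |f' t| ≤ M1 := fun t ht => key a haI m hmI t ht
  have bd2 : ∀ t ∈ Set.Icc m b, |f' t| ≤ M2 := by
    intro t ht
    have := key m hmI b hbI t ht
    rwa [max_comm] at this
  -- integrability facts
  have hfc : ∀ x ∈ Set.uIcc a b, HasDerivAt f (f' x) x := by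
    intro x hx
    rw [Set.uIcc_of_le hab.le] at hx
    exact hf x (hsub hx)
  have hsub1 : Set.uIcc a m ⊆ Set.uIcc a b := by
    rw [Set.uIcc_of_le ham.le, Set.uIcc_of_le hab.le]
    exact Set.Icc_subset_Icc le_rfl hmb.le
  have hsub2 : Set.uIcc m b ⊆ Set.uIcc a b := by
    rw [Set.uIcc_of_le hmb.le, Set.uIcc_of_le hab.le]
    exact Set.Icc_subset_Icc ham.le le_rfl
  have hint1 : IntervalIntegrable f' volume a m := hint.mono_set hsub1
  have hint2 : IntervalIntegrable f' volume m b := hint.mono_set hsub2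
  have hfcont : ContinuousOn f (Set.uIcc a b) := fun x hx =>
    (hfc x hx).continuousAt.continuousWithinAt
  have hfint1 : IntervalIntegrable f volume a m :=
    (hfcont.mono hsub1).intervalIntegrable
  have hfint2 : IntervalIntegrable f volume m b :=
    (hfcont.mono hsub2).intervalIntegrable
  -- integration by parts on [a, m]
  have ibp1 : ∫ t in a..m, (t - a) * f' t = (m - a) * f m - ∫ t in a..m, f t := by
    have := intervalIntegral.integral_mul_deriv_eq_deriv_mul
      (u := fun t => t - a) (u' := fun _ => (1:ℝ)) (v := f) (v' := f')
      (fun x _ => (hasDerivAt_id x).sub_const a)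
      (fun x hx => hfc x (hsub1 hx))
      intervalIntegrable_const hint1
    simpa using this
  have ibp2 : ∫ t in m..b, (t - b) * f' t = (b - m) * f m - ∫ t in m..b, f t := by
    have := intervalIntegral.integral_mul_deriv_eq_deriv_mul
      (u := fun t => t - b) (u' := fun _ => (1:ℝ)) (v := f) (v' := f')
      (fun x _ => (hasDerivAt_id x).sub_const b)
      (fun x hx => hfc x (hsub2 hx))
      intervalIntegrable_const hint2
    simp at this
    rw [this]; ring
  have hsplit : (∫ x in a..b, f x) = (∫ x in a..m, f x) + ∫ x in m..b, f x :=
    (intervalIntegral.integral_add_adjacent_intervals hfint1 hfint2).symm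
  -- identity
  have hid : f m - (1 / (b - a)) * ∫ x in a..b, f x
      = (1 / (b - a)) * ((∫ t in a..m, (t - a) * f' t) + ∫ t in m..b, (t - b) * f' t) := by
    rw [ibp1, ibp2, hsplit]
    have hba : b - a ≠ 0 := sub_ne_zero.mpr (ne_of_gt hab)
    field_simp
    ring
  -- integrability of the products
  have hI1 : IntervalIntegrable (fun t => (t - a) * f' t) volume a m :=
    hint1.continuousOn_mul (by fun_prop)
  have hI2 : IntervalIntegrable (fun t => (t - b) * f' t) volume m b :=
    hint2.continuousOn_mul (by fun_prop)
  -- bounds on individual integrals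
  have habs1 : |∫ t in a..m, (t - a) * f' t| ≤ (b - a) ^ 2 / 8 * M1 := by
    calc |∫ t in a..m, (t - a) * f' t| ≤ ∫ t in a..m, |(t - a) * f' t| :=
        intervalIntegral.abs_integral_le_integral_abs ham.le
      _ ≤ ∫ t in a..m, (t - a) * M1 := by
          apply intervalIntegral.integral_mono_on ham.le hI1.abs
            ((continuousOn_id.sub continuousOn_const).mul continuousOn_const).intervalIntegrable
          intro t ht
          rw [abs_mul, abs_of_nonneg (by linarith [ht.1] : (0:ℝ) ≤ t - a)]
          exact mul_le_mul_of_nonneg_left (bd1 t ht) (by linarith [ht.1])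
      _ = (b - a) ^ 2 / 8 * M1 := by
          rw [intervalIntegral.integral_mul_const]
          have hval : (∫ t in a..m, (t - a)) = (b - a) ^ 2 / 8 := by
            rw [intervalIntegral.integral_sub intervalIntegral.intervalIntegrable_id intervalIntegrable_const,
              integral_id, intervalIntegral.integral_const]
            simp only [hmdef, smul_eq_mul]
            ring
          rw [hval]
  have habs2 : |∫ t in m..b, (t - b) * f' t| ≤ (b - a) ^ 2 / 8 * M2 := by
    calc |∫ t in m..b, (t - b) * f' t| ≤ ∫ t in m..b, |(t - b) * f' t| :=
        intervalIntegral.abs_integral_le_integral_abs hmb.le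
      _ ≤ ∫ t in m..b, (b - t) * M2 := by
          apply intervalIntegral.integral_mono_on hmb.le hI2.abs
            ((continuousOn_const.sub continuousOn_id).mul continuousOn_const).intervalIntegrable
          intro t ht
          rw [abs_mul, abs_sub_comm, abs_of_nonneg (by linarith [ht.2] : (0:ℝ) ≤ b - t)]
          exact mul_le_mul_of_nonneg_left (bd2 t ht) (by linarith [ht.2])
      _ = (b - a) ^ 2 / 8 * M2 := by
          rw [intervalIntegral.integral_mul_const]
          have hval : (∫ t in m..b, (b - t)) = (b - a) ^ 2 / 8 := by
            rw [intervalIntegral.integral_sub intervalIntegrable_const intervalIntegral.intervalIntegrable_id,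
              integral_id, intervalIntegral.integral_const]
            simp only [hmdef, smul_eq_mul]
            ring
          rw [hval]
  -- conclude
  have hba0 : (0:ℝ) < b - a := sub_pos.mpr hab
  rw [hid, abs_mul, abs_of_nonneg (by positivity : (0:ℝ) ≤ 1 / (b - a))]
  calc 1 / (b - a) * |(∫ t in a..m, (t - a) * f' t) + ∫ t in m..b, (t - b) * f' t|
      ≤ 1 / (b - a) * (|∫ t in a..m, (t - a) * f' t| + |∫ t in m..b, (t - b) * f' t|) := by
        apply mul_le_mul_of_nonneg_left (abs_add_le _ _) (by positivity)
    _ ≤ 1 / (b - a) * ((b - a) ^ 2 / 8 * M1 + (b - a) ^ 2 / 8 * M2) := by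
        apply mul_le_mul_of_nonneg_left (add_le_add habs1 habs2) (by positivity)
    _ = (b - a) / 8 * (M1 + M2) := by field_simp
end

section
/- Let f be differentiable on an open interval containing [a,b] (a < b) with f' integrable, q ≥ 1, and suppose |f'|^q is quasi-convex on [a,b]. Then the trapezoid inequality holds: |(f(a) + f(b))/2 − (1/(b−a)) ∫_a^b f(x) dx| ≤ ((b−a)/8) [ (max{|f'(a)|^q, |f'((a+b)/2)|^q})^(1/q) + (max{|f'(b)|^q, |f'((a+b)/2)|^q})^(1/q) ]. -/
open MeasureTheory

theorem stmt_8 (f f' : ℝ → ℝ) (a b q c d : ℝ) (hab : a < b) (hq : 1 ≤ q)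
    (hca : c < a) (hbd : b < d)
    (hf : ∀ x ∈ Set.Ioo c d, HasDerivAt f (f' x) x)
    (hint : IntervalIntegrable f' volume a b)
    (hqc : ∀ x ∈ Set.Icc a b, ∀ y ∈ Set.Icc a b, ∀ α ∈ Set.Icc (0:ℝ) 1,
      |f' (α * x + (1 - α) * y)| ^ q ≤ max (|f' x| ^ q) (|f' y| ^ q)) :
    |(f a + f b) / 2 - (1 / (b - a)) * ∫ x in a..b, f x|
      ≤ (b - a) / 8 *
          ((max (|f' a| ^ q) (|f' ((a + b) / 2)| ^ q)) ^ (1 / q)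
            + (max (|f' b| ^ q) (|f' ((a + b) / 2)| ^ q)) ^ (1 / q)) := by
  have hq0 : (0:ℝ) < q := lt_of_lt_of_le one_pos hq
  set m : ℝ := (a + b) / 2 with hm
  have ham : a < m := by simp [hm]; linarith
  have hmb : m < b := by simp [hm]; linarith
  set K1 : ℝ := (max (|f' a| ^ q) (|f' m| ^ q)) ^ (1 / q) with hK1def
  set K2 : ℝ := (max (|f' b| ^ q) (|f' m| ^ q)) ^ (1 / q) with hK2def
  -- pointwise bounds from quasi-convexity
  have key : ∀ u ∈ Set.Icc a b, ∀ x, a ≤ x → x ≤ b →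
      (∃ α ∈ Set.Icc (0:ℝ) 1, α * u + (1 - α) * m = x) →
      |f' x| ≤ (max (|f' u| ^ q) (|f' m| ^ q)) ^ (1 / q) := by
    intro u hu x hax hxb ⟨α, hα, hαx⟩
    have hmmem : m ∈ Set.Icc a b := ⟨le_of_lt ham, le_of_lt hmb⟩
    have h1 := hqc u hu m hmmem α hα
    rw [hαx] at h1
    have h2 : |f' x| = (|f' x| ^ q) ^ (1 / q) := by
      rw [one_div, Real.rpow_rpow_inv (abs_nonneg _) (ne_of_gt hq0)]
    rw [h2]
    exact Real.rpow_le_rpow (Real.rpow_nonneg (abs_nonneg _) _) h1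
      (by positivity)
  have hK1 : ∀ x ∈ Set.Icc a m, |f' x| ≤ K1 := by
    intro x hx
    refine key a ⟨le_refl _, le_of_lt hab⟩ x hx.1 (le_trans hx.2 (le_of_lt hmb)) ?_
    refine ⟨(m - x) / (m - a), ⟨div_nonneg (by linarith [hx.2]) (by linarith), ?_⟩, ?_⟩
    · rw [div_le_one (by linarith)]; linarith [hx.1]
    · have h : (m - x) / (m - a) * (m - a) = m - x :=
        div_mul_cancel₀ _ (ne_of_gt (by linarith : (0:ℝ) < m - a))
      linear_combination -h
  have hK2 : ∀ x ∈ Set.Icc m b, |f' x| ≤ K2 := by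
    intro x hx
    refine key b ⟨le_of_lt hab, le_refl _⟩ x (le_trans (le_of_lt ham) hx.1) hx.2 ?_
    refine ⟨(x - m) / (b - m), ⟨div_nonneg (by linarith [hx.1]) (by linarith), ?_⟩, ?_⟩
    · rw [div_le_one (by linarith)]; linarith [hx.2]
    · have h : (x - m) / (b - m) * (b - m) = x - m :=
        div_mul_cancel₀ _ (ne_of_gt (by linarith : (0:ℝ) < b - m))
      linear_combination h
  have hK1nn : 0 ≤ K1 := Real.rpow_nonneg (le_trans (Real.rpow_nonneg (abs_nonneg _) _) (le_max_left _ _)) _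
  have hK2nn : 0 ≤ K2 := Real.rpow_nonneg (le_trans (Real.rpow_nonneg (abs_nonneg _) _) (le_max_left _ _)) _
  -- integration by parts
  have hfd : ∀ x ∈ Set.uIcc a b, HasDerivAt f (f' x) x := by
    intro x hx
    rw [Set.uIcc_of_le (le_of_lt hab)] at hx
    exact hf x ⟨lt_of_lt_of_le hca hx.1, lt_of_le_of_lt hx.2 hbd⟩
  have hud : ∀ x ∈ Set.uIcc a b, HasDerivAt (fun y => y - m) ((fun _ => (1:ℝ)) x) x := by
    intro x _
    simpa using (hasDerivAt_id x).sub_const m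
  have hparts := intervalIntegral.integral_mul_deriv_eq_deriv_mul hud hfd
    (intervalIntegrable_const) hint
  -- integrability of f on [a,b] (for the integral of f)
  have hfint : IntervalIntegrable f volume a b := by
    apply ContinuousOn.intervalIntegrable
    intro x hx
    rw [Set.uIcc_of_le (le_of_lt hab)] at hx
    exact ((hf x ⟨lt_of_lt_of_le hca hx.1, lt_of_le_of_lt hx.2 hbd⟩).continuousAt).continuousWithinAt
  have hba : (0:ℝ) < b - a := by linarith
  -- identity
  have hid : (f a + f b) / 2 - (1 / (b - a)) * ∫ x in a..b, f x
      = (1 / (b - a)) * ∫ x in a..b, (x - m) * f' x := by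
    rw [hparts]
    simp only [one_mul]
    field_simp
    ring
  rw [hid, abs_mul, abs_of_pos (by positivity : (0:ℝ) < 1 / (b - a))]
  -- split the integral
  have hgint : IntervalIntegrable (fun x => (x - m) * f' x) volume a b :=
    hint.continuousOn_mul (by fun_prop)
  have hsub1 : Set.uIcc a m ⊆ Set.uIcc a b := by
    rw [Set.uIcc_of_le ham.le, Set.uIcc_of_le hab.le]
    exact Set.Icc_subset_Icc le_rfl hmb.le
  have hsub2 : Set.uIcc m b ⊆ Set.uIcc a b := by
    rw [Set.uIcc_of_le hmb.le, Set.uIcc_of_le hab.le]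
    exact Set.Icc_subset_Icc ham.le le_rfl
  have hgint1 : IntervalIntegrable (fun x => (x - m) * f' x) volume a m :=
    hgint.mono_set hsub1
  have hgint2 : IntervalIntegrable (fun x => (x - m) * f' x) volume m b :=
    hgint.mono_set hsub2
  have hsplit : (∫ x in a..b, (x - m) * f' x)
      = (∫ x in a..m, (x - m) * f' x) + ∫ x in m..b, (x - m) * f' x :=
    (intervalIntegral.integral_add_adjacent_intervals hgint1 hgint2).symm
  -- bound each piece
  have hb1 : |∫ x in a..m, (x - m) * f' x| ≤ (m - a)^2 / 2 * K1 := by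
    calc |∫ x in a..m, (x - m) * f' x| ≤ ∫ x in a..m, |(x - m) * f' x| :=
          intervalIntegral.abs_integral_le_integral_abs (le_of_lt ham)
      _ ≤ ∫ x in a..m, (m - x) * K1 := by
          apply intervalIntegral.integral_mono_on (le_of_lt ham) hgint1.abs
          · exact (ContinuousOn.intervalIntegrable (by fun_prop))
          · intro x hx
            rw [abs_mul]
            have : |x - m| = m - x := by
              rw [abs_of_nonpos (by linarith [hx.2])]; ring
            rw [this]
            exact mul_le_mul_of_nonneg_left (hK1 x hx) (by linarith [hx.2])
      _ = (m - a)^2 / 2 * K1 := by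
          rw [intervalIntegral.integral_mul_const,
            intervalIntegral.integral_sub intervalIntegrable_const intervalIntegral.intervalIntegrable_id,
            intervalIntegral.integral_const, integral_id, smul_eq_mul]
          ring
  have hb2 : |∫ x in m..b, (x - m) * f' x| ≤ (b - m)^2 / 2 * K2 := by
    calc |∫ x in m..b, (x - m) * f' x| ≤ ∫ x in m..b, |(x - m) * f' x| :=
          intervalIntegral.abs_integral_le_integral_abs (le_of_lt hmb)
      _ ≤ ∫ x in m..b, (x - m) * K2 := by
          apply intervalIntegral.integral_mono_on (le_of_lt hmb) hgint2.abs
          · exact (ContinuousOn.intervalIntegrable (by fun_prop))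
          · intro x hx
            rw [abs_mul]
            have : |x - m| = x - m := abs_of_nonneg (by linarith [hx.1])
            rw [this]
            exact mul_le_mul_of_nonneg_left (hK2 x hx) (by linarith [hx.1])
      _ = (b - m)^2 / 2 * K2 := by
          rw [intervalIntegral.integral_mul_const,
            intervalIntegral.integral_sub intervalIntegral.intervalIntegrable_id intervalIntegrable_const,
            intervalIntegral.integral_const, integral_id, smul_eq_mul]
          ring
  have habs : |∫ x in a..b, (x - m) * f' x| ≤ (m - a)^2/2 * K1 + (b - m)^2/2 * K2 := by
    rw [hsplit]
    exact le_trans (abs_add_le _ _) (add_le_add hb1 hb2)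
  have hma : m - a = (b - a) / 2 := by rw [hm]; ring
  have hbm : b - m = (b - a) / 2 := by rw [hm]; ring
  calc 1 / (b - a) * |∫ x in a..b, (x - m) * f' x|
      ≤ 1 / (b - a) * ((m - a)^2/2 * K1 + (b - m)^2/2 * K2) :=
        mul_le_mul_of_nonneg_left habs (by positivity)
    _ = (b - a) / 8 * (K1 + K2) := by
        rw [hma, hbm]
        field_simp
        ring
    _ = _ := by rw [hK1def, hK2def, hm]
end

section
/- Let f be differentiable on an open interval containing [a,b] (a < b) with f' integrable, let θ, λ ∈ [0,1], q > 1 with 1/p + 1/q = 1, and set C = (1−λ)a + λb. If |f'|^q is quasi-convex on [a,b], then |(1−θ)(λ f(a) + (1−λ) f(b)) + θ f(C) − (1/(b−a)) ∫_a^b f(x) dx| ≤ (b−a) ((θ^(p+1) + (1−θ)^(p+1))/(p+1))^(1/p) [ λ² (max{|f'(a)|^q, |f'(C)|^q})^(1/q) + (1−λ)² (max{|f'(b)|^q, |f'(C)|^q})^(1/q) ]. -/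
open MeasureTheory

private lemma aux_abs_le_rpow {r s q : ℝ} (hq : 1 < q) (h : |r| ^ q ≤ s) :
    |r| ≤ s ^ (1 / q) := by
  have hq0 : q ≠ 0 := by positivity
  have h1 : (|r| ^ q) ^ (1 / q) = |r| := by
    rw [one_div]; exact Real.rpow_rpow_inv (abs_nonneg r) hq0
  calc |r| = (|r| ^ q) ^ (1 / q) := h1.symm
    _ ≤ s ^ (1 / q) := Real.rpow_le_rpow (Real.rpow_nonneg (abs_nonneg r) q) h (by positivity)

private lemma aux_int_abs {u v X : ℝ} (h1 : u ≤ X) (h2 : X ≤ v) :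
    ∫ x in u..v, |x - X| = ((X - u) ^ 2 + (v - X) ^ 2) / 2 := by
  have hc : ∀ Y : ℝ, IntervalIntegrable (fun x : ℝ => |x - X|) volume Y X :=
    fun Y => (continuous_abs.comp (continuous_id.sub continuous_const)).intervalIntegrable _ _
  have i1 : ∫ x in u..X, |x - X| = (X - u) ^ 2 / 2 := by
    rw [intervalIntegral.integral_congr (g := fun x => X - x)
      (by
        intro x hx
        rw [Set.uIcc_of_le h1] at hx
        show |x - X| = X - x
        rw [abs_sub_comm, abs_of_nonneg (by linarith [hx.2] : (0:ℝ) ≤ X - x)])]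
    rw [intervalIntegral.integral_sub intervalIntegrable_const intervalIntegral.intervalIntegrable_id,
      intervalIntegral.integral_const, integral_id]
    simp only [smul_eq_mul]
    ring
  have i2 : ∫ x in X..v, |x - X| = (v - X) ^ 2 / 2 := by
    rw [intervalIntegral.integral_congr (g := fun x => x - X)
      (by
        intro x hx
        rw [Set.uIcc_of_le h2] at hx
        show |x - X| = x - X
        rw [abs_of_nonneg (by linarith [hx.1] : (0:ℝ) ≤ x - X)])]
    rw [intervalIntegral.integral_sub intervalIntegral.intervalIntegrable_id intervalIntegrable_const,
      intervalIntegral.integral_const, integral_id]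
    simp only [smul_eq_mul]
    ring
  rw [← intervalIntegral.integral_add_adjacent_intervals (hc u)
    ((continuous_abs.comp (continuous_id.sub continuous_const)).intervalIntegrable _ _), i1, i2]
  ring

private lemma aux_scalar {θ p : ℝ} (hθ0 : 0 ≤ θ) (hθ1 : θ ≤ 1) (hp : 1 < p) :
    (θ ^ 2 + (1 - θ) ^ 2) / 2 ≤ ((θ ^ (p + 1) + (1 - θ) ^ (p + 1)) / (p + 1)) ^ (1 / p) := by
  have hp0 : (0:ℝ) < p := by linarith
  have hp0' : p ≠ 0 := ne_of_gt hp0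
  set v : ℝ := 1 - θ with hv
  have hv0 : 0 ≤ v := by simp [hv]; linarith
  have hS0 : 0 ≤ θ ^ (p + 1) + v ^ (p + 1) := by positivity
  -- convexity of rpow gives two-point Jensen
  have hconv := (convexOn_rpow hp.le).2 (Set.mem_Ici.2 hθ0) (Set.mem_Ici.2 hv0)
      hθ0 hv0 (by simp [hv])
  simp only [smul_eq_mul] at hconv
  have hθp : θ * θ ^ p = θ ^ (p + 1) := by
    rw [add_comm, Real.rpow_one_add' hθ0 (by linarith)]
  have hvp : v * v ^ p = v ^ (p + 1) := by
    rw [add_comm, Real.rpow_one_add' hv0 (by linarith)]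
  have hA0 : 0 ≤ θ * θ + v * v := by positivity
  have hconv' : (θ * θ + v * v) ^ p ≤ θ ^ (p + 1) + v ^ (p + 1) := by
    rw [← hθp, ← hvp]; exact hconv
  have h1 : θ * θ + v * v ≤ (θ ^ (p + 1) + v ^ (p + 1)) ^ (1 / p) := by
    calc θ * θ + v * v = ((θ * θ + v * v) ^ p) ^ (1 / p) := by
          rw [one_div, Real.rpow_rpow_inv hA0 hp0']
      _ ≤ (θ ^ (p + 1) + v ^ (p + 1)) ^ (1 / p) :=
          Real.rpow_le_rpow (Real.rpow_nonneg hA0 p) hconv' (by positivity)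
  -- Bernoulli: p + 1 ≤ 2 ^ p
  have hbern : p + 1 ≤ (2:ℝ) ^ p := by
    have := one_add_mul_self_le_rpow_one_add (by norm_num : (-1:ℝ) ≤ 1) hp.le
    norm_num at this
    linarith
  have hp1pos : (0:ℝ) < p + 1 := by linarith
  have h2 : (p + 1) ^ (1 / p) ≤ 2 := by
    calc (p + 1) ^ (1 / p) ≤ ((2:ℝ) ^ p) ^ (1 / p) :=
          Real.rpow_le_rpow hp1pos.le hbern (by positivity)
      _ = 2 := by rw [one_div, Real.rpow_rpow_inv (by norm_num) hp0']
  have hdiv : ((θ ^ (p + 1) + v ^ (p + 1)) / (p + 1)) ^ (1 / p)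
      = (θ ^ (p + 1) + v ^ (p + 1)) ^ (1 / p) / (p + 1) ^ (1 / p) :=
    Real.div_rpow hS0 hp1pos.le (1 / p)
  rw [hdiv]
  have h3 : (θ ^ (p + 1) + v ^ (p + 1)) ^ (1 / p) / 2
      ≤ (θ ^ (p + 1) + v ^ (p + 1)) ^ (1 / p) / (p + 1) ^ (1 / p) :=
    div_le_div_of_nonneg_left (Real.rpow_nonneg hS0 _) (Real.rpow_pos_of_pos hp1pos _) h2
  calc (θ ^ 2 + v ^ 2) / 2 = (θ * θ + v * v) / 2 := by ring
    _ ≤ (θ ^ (p + 1) + v ^ (p + 1)) ^ (1 / p) / 2 := by linarith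
    _ ≤ _ := h3

theorem stmt_9 (f f' : ℝ → ℝ) (a b θ lam p q c d : ℝ) (hab : a < b)
    (hθ : θ ∈ Set.Icc (0:ℝ) 1) (hlam : lam ∈ Set.Icc (0:ℝ) 1)
    (hq : 1 < q) (hpq : 1 / p + 1 / q = 1)
    (hca : c < a) (hbd : b < d)
    (hf : ∀ x ∈ Set.Ioo c d, HasDerivAt f (f' x) x)
    (hint : IntervalIntegrable f' volume a b)
    (hqc : ∀ x ∈ Set.Icc a b, ∀ y ∈ Set.Icc a b, ∀ α ∈ Set.Icc (0:ℝ) 1,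
      |f' (α * x + (1 - α) * y)| ^ q ≤ max (|f' x| ^ q) (|f' y| ^ q)) :
    |(1 - θ) * (lam * f a + (1 - lam) * f b) + θ * f ((1 - lam) * a + lam * b)
        - (1 / (b - a)) * ∫ x in a..b, f x|
      ≤ (b - a) * ((θ ^ (p + 1) + (1 - θ) ^ (p + 1)) / (p + 1)) ^ (1 / p) *
          (lam ^ 2 * (max (|f' a| ^ q) (|f' ((1 - lam) * a + lam * b)| ^ q)) ^ (1 / q)
            + (1 - lam) ^ 2 * (max (|f' b| ^ q) (|f' ((1 - lam) * a + lam * b)| ^ q)) ^ (1 / q)) := by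
  obtain ⟨hθ0, hθ1⟩ := hθ
  obtain ⟨hl0, hl1⟩ := hlam
  have hB : (0:ℝ) < b - a := sub_pos.2 hab
  have hq0 : (0:ℝ) < q := by linarith
  have hp1 : 1 < p := by
    have h3 : 0 < 1 / p := by
      have : 1 / p = 1 - 1 / q := by linarith
      rw [this, sub_pos, div_lt_one hq0]; exact hq
    have hp0 : 0 < p := one_div_pos.mp h3
    have h4 : 1 / p < 1 := by
      have h1q : 0 < 1 / q := by positivity
      linarith
    rw [div_lt_one hp0] at h4; exact h4
  set C := (1 - lam) * a + lam * b with hC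
  have haC : a ≤ C := by nlinarith
  have hCb : C ≤ b := by nlinarith
  set X₁ := a + lam * (1 - θ) * (b - a) with hX1
  set X₂ := b - (1 - lam) * (1 - θ) * (b - a) with hX2
  have haX1 : a ≤ X₁ := by nlinarith
  have hX1C : X₁ ≤ C := by nlinarith [mul_nonneg (mul_nonneg hl0 hθ0) hB.le]
  have hCX2 : C ≤ X₂ := by
    nlinarith [mul_nonneg (mul_nonneg (by linarith : (0:ℝ) ≤ 1 - lam) hθ0) hB.le]
  have hX2b : X₂ ≤ b := by
    nlinarith [mul_nonneg (mul_nonneg (by linarith : (0:ℝ) ≤ 1 - lam)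
      (by linarith : (0:ℝ) ≤ 1 - θ)) hB.le]
  have hsub : Set.Icc a b ⊆ Set.Ioo c d := fun x hx =>
    ⟨lt_of_lt_of_le hca hx.1, lt_of_le_of_lt hx.2 hbd⟩
  have hfd : ∀ x ∈ Set.Icc a b, HasDerivAt f (f' x) x := fun x hx => hf x (hsub hx)
  have hfc : ContinuousOn f (Set.Icc a b) :=
    fun x hx => ((hfd x hx).continuousAt).continuousWithinAt
  have hfi1 : IntervalIntegrable f volume a C := ContinuousOn.intervalIntegrable
    (by rw [Set.uIcc_of_le haC]; exact hfc.mono (Set.Icc_subset_Icc le_rfl hCb))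
  have hfi2 : IntervalIntegrable f volume C b := ContinuousOn.intervalIntegrable
    (by rw [Set.uIcc_of_le hCb]; exact hfc.mono (Set.Icc_subset_Icc haC le_rfl))
  have hint1 : IntervalIntegrable f' volume a C := hint.mono_set
    (by rw [Set.uIcc_of_le haC, Set.uIcc_of_le hab.le]; exact Set.Icc_subset_Icc le_rfl hCb)
  have hint2 : IntervalIntegrable f' volume C b := hint.mono_set
    (by rw [Set.uIcc_of_le hCb, Set.uIcc_of_le hab.le]; exact Set.Icc_subset_Icc haC le_rfl)
  have h1 : ∫ x in a..C, (x - X₁) * f' x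
      = (C - X₁) * f C - (a - X₁) * f a - ∫ x in a..C, f x := by
    have := intervalIntegral.integral_mul_deriv_eq_deriv_mul
      (u := fun x => x - X₁) (u' := fun _ => (1:ℝ)) (v := f) (v' := f') (a := a) (b := C)
      (fun x _ => (hasDerivAt_id x).sub_const X₁)
      (fun x hx => hfd x (by rw [Set.uIcc_of_le haC] at hx
                             exact ⟨hx.1, le_trans hx.2 hCb⟩))
      intervalIntegrable_const hint1
    simpa using this
  have h2 : ∫ x in C..b, (x - X₂) * f' x
      = (b - X₂) * f b - (C - X₂) * f C - ∫ x in C..b, f x := by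
    have := intervalIntegral.integral_mul_deriv_eq_deriv_mul
      (u := fun x => x - X₂) (u' := fun _ => (1:ℝ)) (v := f) (v' := f') (a := C) (b := b)
      (fun x _ => (hasDerivAt_id x).sub_const X₂)
      (fun x hx => hfd x (by rw [Set.uIcc_of_le hCb] at hx
                             exact ⟨le_trans haC hx.1, hx.2⟩))
      intervalIntegrable_const hint2
    simpa using this
  have hsplit : (∫ x in a..C, f x) + ∫ x in C..b, f x = ∫ x in a..b, f x :=
    intervalIntegral.integral_add_adjacent_intervals hfi1 hfi2
  have key : (1 - θ) * (lam * f a + (1 - lam) * f b) + θ * f C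
      - (1 / (b - a)) * ∫ x in a..b, f x
      = ((∫ x in a..C, (x - X₁) * f' x) + ∫ x in C..b, (x - X₂) * f' x) / (b - a) := by
    rw [h1, h2, ← hsplit, hC, hX1, hX2]
    field_simp
    ring
  rw [key, abs_div, abs_of_pos hB]
  set M₁ := max (|f' a| ^ q) (|f' C| ^ q) with hM1def
  set M₂ := max (|f' b| ^ q) (|f' C| ^ q) with hM2def
  have hM10 : 0 ≤ M₁ := le_trans (Real.rpow_nonneg (abs_nonneg _) q) (le_max_left _ _)
  have hM20 : 0 ≤ M₂ := le_trans (Real.rpow_nonneg (abs_nonneg _) q) (le_max_left _ _)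
  have hbd1 : ∀ x ∈ Set.Icc a C, |f' x| ≤ M₁ ^ (1 / q) := by
    intro x hx
    rcases eq_or_lt_of_le haC with h | h
    · have hxa : x = a := le_antisymm (h ▸ hx.2) hx.1
      exact aux_abs_le_rpow hq (by rw [hxa]; exact le_max_left _ _)
    · set α := (C - x) / (C - a) with hα
      have hCa0 : (0:ℝ) < C - a := by linarith
      have hαm : α ∈ Set.Icc (0:ℝ) 1 :=
        ⟨div_nonneg (by linarith [hx.2]) hCa0.le,
         (div_le_one hCa0).2 (by linarith [hx.1])⟩
      have hxx : α * a + (1 - α) * C = x := by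
        rw [hα]; field_simp; ring
      have hb := hqc a ⟨le_rfl, hab.le⟩ C ⟨haC, hCb⟩ α hαm
      rw [hxx] at hb
      exact aux_abs_le_rpow hq hb
  have hbd2 : ∀ x ∈ Set.Icc C b, |f' x| ≤ M₂ ^ (1 / q) := by
    intro x hx
    rcases eq_or_lt_of_le hCb with h | h
    · have hxb : x = b := le_antisymm hx.2 (h ▸ hx.1)
      exact aux_abs_le_rpow hq (by rw [hxb]; exact le_max_left _ _)
    · set α := (x - C) / (b - C) with hα
      have hbC0 : (0:ℝ) < b - C := by linarith
      have hαm : α ∈ Set.Icc (0:ℝ) 1 :=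
        ⟨div_nonneg (by linarith [hx.1]) hbC0.le,
         (div_le_one hbC0).2 (by linarith [hx.2])⟩
      have hxx : α * b + (1 - α) * C = x := by
        rw [hα]; field_simp; ring
      have hb := hqc b ⟨hab.le, le_rfl⟩ C ⟨haC, hCb⟩ α hαm
      rw [hxx] at hb
      exact aux_abs_le_rpow hq hb
  have hb1 : |∫ x in a..C, (x - X₁) * f' x|
      ≤ M₁ ^ (1 / q) * (((X₁ - a) ^ 2 + (C - X₁) ^ 2) / 2) := by
    calc |∫ x in a..C, (x - X₁) * f' x| ≤ ∫ x in a..C, |(x - X₁) * f' x| :=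
          intervalIntegral.abs_integral_le_integral_abs haC
      _ ≤ ∫ x in a..C, |x - X₁| * M₁ ^ (1 / q) := by
          apply intervalIntegral.integral_mono_on haC
            ((hint1.continuousOn_mul ((continuous_id.sub continuous_const).continuousOn)).abs)
            (((continuous_abs.comp (continuous_id.sub continuous_const)).mul
              continuous_const).intervalIntegrable _ _)
          intro x hx
          rw [abs_mul]
          exact mul_le_mul_of_nonneg_left (hbd1 x hx) (abs_nonneg _)
      _ = M₁ ^ (1 / q) * (((X₁ - a) ^ 2 + (C - X₁) ^ 2) / 2) := by
          rw [intervalIntegral.integral_mul_const, aux_int_abs haX1 hX1C]; ring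
  have hb2 : |∫ x in C..b, (x - X₂) * f' x|
      ≤ M₂ ^ (1 / q) * (((X₂ - C) ^ 2 + (b - X₂) ^ 2) / 2) := by
    calc |∫ x in C..b, (x - X₂) * f' x| ≤ ∫ x in C..b, |(x - X₂) * f' x| :=
          intervalIntegral.abs_integral_le_integral_abs hCb
      _ ≤ ∫ x in C..b, |x - X₂| * M₂ ^ (1 / q) := by
          apply intervalIntegral.integral_mono_on hCb
            ((hint2.continuousOn_mul ((continuous_id.sub continuous_const).continuousOn)).abs)
            (((continuous_abs.comp (continuous_id.sub continuous_const)).mul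
              continuous_const).intervalIntegrable _ _)
          intro x hx
          rw [abs_mul]
          exact mul_le_mul_of_nonneg_left (hbd2 x hx) (abs_nonneg _)
      _ = M₂ ^ (1 / q) * (((X₂ - C) ^ 2 + (b - X₂) ^ 2) / 2) := by
          rw [intervalIntegral.integral_mul_const, aux_int_abs hCX2 hX2b]; ring
  have habs : |(∫ x in a..C, (x - X₁) * f' x) + ∫ x in C..b, (x - X₂) * f' x|
      ≤ M₁ ^ (1 / q) * (((X₁ - a) ^ 2 + (C - X₁) ^ 2) / 2)
        + M₂ ^ (1 / q) * (((X₂ - C) ^ 2 + (b - X₂) ^ 2) / 2) :=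
    (abs_add_le _ _).trans (add_le_add hb1 hb2)
  have hT0 : 0 ≤ lam ^ 2 * M₁ ^ (1 / q) + (1 - lam) ^ 2 * M₂ ^ (1 / q) := by positivity
  calc |(∫ x in a..C, (x - X₁) * f' x) + ∫ x in C..b, (x - X₂) * f' x| / (b - a)
      ≤ (M₁ ^ (1 / q) * (((X₁ - a) ^ 2 + (C - X₁) ^ 2) / 2)
        + M₂ ^ (1 / q) * (((X₂ - C) ^ 2 + (b - X₂) ^ 2) / 2)) / (b - a) := by gcongr
    _ = (b - a) * ((θ ^ 2 + (1 - θ) ^ 2) / 2)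
        * (lam ^ 2 * M₁ ^ (1 / q) + (1 - lam) ^ 2 * M₂ ^ (1 / q)) := by
        rw [hX1, hX2, hC]
        field_simp
        ring
    _ ≤ (b - a) * ((θ ^ (p + 1) + (1 - θ) ^ (p + 1)) / (p + 1)) ^ (1 / p)
        * (lam ^ 2 * M₁ ^ (1 / q) + (1 - lam) ^ 2 * M₂ ^ (1 / q)) :=
        mul_le_mul_of_nonneg_right
          (mul_le_mul_of_nonneg_left (aux_scalar hθ0 hθ1 hp1) hB.le) hT0
end

section
/- Let f be differentiable on an open interval containing [a,b] (a < b) with f' integrable, q > 1 with 1/p + 1/q = 1, and suppose |f'|^q is quasi-convex on [a,b]. Then the Simpson-type inequality holds: |(1/6)[f(a) + 4 f((a+b)/2) + f(b)] − (1/(b−a)) ∫_a^b f(x) dx| ≤ ((b−a)/12) ((1 + 2^(p+1))/(3(p+1)))^(1/p) [ (max{|f'((a+b)/2)|^q, |f'(a)|^q})^(1/q) + (max{|f'((a+b)/2)|^q, |f'(b)|^q})^(1/q) ]. -/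
open MeasureTheory

/-- Integral of `|x - w|` over `[u, v]` when `u ≤ w ≤ v`. -/
lemma abs_linear_integral (u w v : ℝ) (h1 : u ≤ w) (h2 : w ≤ v) :
    ∫ x in u..v, |x - w| = (w - u) ^ 2 / 2 + (v - w) ^ 2 / 2 := by
  have hc : Continuous fun x : ℝ => |x - w| := (continuous_id.sub continuous_const).abs
  rw [← intervalIntegral.integral_add_adjacent_intervals (b := w)
      (hc.intervalIntegrable u w) (hc.intervalIntegrable w v)]
  have e1 : (∫ x in u..w, |x - w|) = ∫ x in u..w, (w - x) := by
    apply intervalIntegral.integral_congr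
    intro x hx
    rw [Set.uIcc_of_le h1] at hx
    show |x - w| = w - x
    rw [abs_of_nonpos (by linarith [hx.2])]
    ring
  have e2 : (∫ x in w..v, |x - w|) = ∫ x in w..v, (x - w) := by
    apply intervalIntegral.integral_congr
    intro x hx
    rw [Set.uIcc_of_le h2] at hx
    show |x - w| = x - w
    exact abs_of_nonneg (by linarith [hx.1])
  rw [e1, e2,
    intervalIntegral.integral_sub intervalIntegrable_const intervalIntegral.intervalIntegrable_id,
    intervalIntegral.integral_sub intervalIntegral.intervalIntegrable_id intervalIntegrable_const,
    integral_id, integral_id, intervalIntegral.integral_const, intervalIntegral.integral_const]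
  simp only [smul_eq_mul]
  ring

/-- The Simpson constant is at least `5/6` for `p > 1`. -/
lemma simpson_const_ge (p : ℝ) (hp : 1 < p) :
    (5 / 6 : ℝ) ≤ ((1 + 2 ^ (p + 1)) / (3 * (p + 1))) ^ (1 / p) := by
  have hp0 : 0 < p := by linarith
  have hlog : (5 / 8 : ℝ) ≤ Real.log 2 := by
    have := Real.log_two_gt_d9
    linarith
  have h2exp : (2 : ℝ) ^ (p + 1) = 4 * Real.exp ((p - 1) * Real.log 2) := by
    rw [Real.rpow_def_of_pos (by norm_num : (0:ℝ) < 2)]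
    rw [show Real.log 2 * (p + 1) = Real.log 2 + Real.log 2 + (p - 1) * Real.log 2 by ring]
    rw [Real.exp_add, Real.exp_add, Real.exp_log (by norm_num : (0:ℝ) < 2)]
    ring
  have hge : (5 / 2 : ℝ) * (p + 1) ≤ 1 + 2 ^ (p + 1) := by
    have h1 : (p - 1) * Real.log 2 + 1 ≤ Real.exp ((p - 1) * Real.log 2) :=
      Real.add_one_le_exp _
    have h3 : (5 / 8 : ℝ) * (p - 1) ≤ (p - 1) * Real.log 2 := by
      have := mul_le_mul_of_nonneg_left hlog (by linarith : (0:ℝ) ≤ p - 1)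
      linarith
    rw [h2exp]
    nlinarith
  have hbase : (5 / 6 : ℝ) ^ p ≤ (1 + 2 ^ (p + 1)) / (3 * (p + 1)) := by
    have h56 : (5 / 6 : ℝ) ^ p ≤ (5 / 6 : ℝ) ^ (1 : ℝ) :=
      Real.rpow_le_rpow_of_exponent_ge (by norm_num) (by norm_num) hp.le
    rw [Real.rpow_one] at h56
    refine h56.trans ?_
    rw [le_div_iff₀ (by positivity : (0:ℝ) < 3 * (p + 1))]
    linarith
  calc (5 / 6 : ℝ) = ((5 / 6 : ℝ) ^ p) ^ (1 / p) := by
        rw [← Real.rpow_mul (by norm_num : (0:ℝ) ≤ 5/6), mul_one_div_cancel hp0.ne',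
          Real.rpow_one]
    _ ≤ ((1 + 2 ^ (p + 1)) / (3 * (p + 1))) ^ (1 / p) :=
        Real.rpow_le_rpow (Real.rpow_nonneg (by norm_num) _) hbase (by positivity)

theorem stmt_10 (f f' : ℝ → ℝ) (a b p q c d : ℝ) (hab : a < b)
    (hq : 1 < q) (hpq : 1 / p + 1 / q = 1)
    (hca : c < a) (hbd : b < d)
    (hf : ∀ x ∈ Set.Ioo c d, HasDerivAt f (f' x) x)
    (hint : IntervalIntegrable f' volume a b)
    (hqc : ∀ x ∈ Set.Icc a b, ∀ y ∈ Set.Icc a b, ∀ α ∈ Set.Icc (0:ℝ) 1,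
      |f' (α * x + (1 - α) * y)| ^ q ≤ max (|f' x| ^ q) (|f' y| ^ q)) :
    |(1 / 6) * (f a + 4 * f ((a + b) / 2) + f b) - (1 / (b - a)) * ∫ x in a..b, f x|
      ≤ (b - a) / 12 * ((1 + 2 ^ (p + 1)) / (3 * (p + 1))) ^ (1 / p) *
          ((max (|f' ((a + b) / 2)| ^ q) (|f' a| ^ q)) ^ (1 / q)
            + (max (|f' ((a + b) / 2)| ^ q) (|f' b| ^ q)) ^ (1 / q)) := by
  have hq0 : (0 : ℝ) < q := by linarith
  have hba : (0 : ℝ) < b - a := by linarith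
  -- p > 1
  have hpinv : 0 < 1 / p := by
    have : 1 / q < 1 := by rw [div_lt_one hq0]; exact hq
    linarith
  have hp0 : 0 < p := one_div_pos.mp hpinv
  have hp1 : 1 < p := by
    have h1 : 1 / p < 1 := by
      have : 0 < 1 / q := by positivity
      linarith
    rwa [div_lt_one hp0] at h1
  set m : ℝ := (a + b) / 2 with hm
  have ham : a < m := by rw [hm]; linarith
  have hmb : m < b := by rw [hm]; linarith
  have hmab : m ∈ Set.Icc a b := ⟨ham.le, hmb.le⟩
  set M1 : ℝ := (max (|f' m| ^ q) (|f' a| ^ q)) ^ (1 / q) with hM1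
  set M2 : ℝ := (max (|f' m| ^ q) (|f' b| ^ q)) ^ (1 / q) with hM2
  have hM1nn : 0 ≤ M1 := Real.rpow_nonneg
    (le_trans (Real.rpow_nonneg (abs_nonneg _) q) (le_max_left _ _)) _
  have hM2nn : 0 ≤ M2 := Real.rpow_nonneg
    (le_trans (Real.rpow_nonneg (abs_nonneg _) q) (le_max_left _ _)) _
  have hrpow_id : ∀ x : ℝ, |f' x| = (|f' x| ^ q) ^ (1 / q) := by
    intro x
    rw [← Real.rpow_mul (abs_nonneg _), mul_one_div_cancel hq0.ne', Real.rpow_one]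
  -- pointwise bound on the left half
  have key1 : ∀ x ∈ Set.Icc a m, |f' x| ≤ M1 := by
    intro x hx
    have hma : (0:ℝ) < m - a := by linarith
    set α : ℝ := (x - a) / (m - a) with hα
    have hαmem : α ∈ Set.Icc (0:ℝ) 1 :=
      ⟨div_nonneg (by linarith [hx.1]) hma.le, (div_le_one hma).2 (by linarith [hx.2])⟩
    have hxeq : α * m + (1 - α) * a = x := by
      rw [hα]; field_simp; ring
    have hle := hqc m hmab a ⟨le_refl a, hab.le⟩ α hαmem
    rw [hxeq] at hle
    rw [hrpow_id x, hM1]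
    exact Real.rpow_le_rpow (Real.rpow_nonneg (abs_nonneg _) _) hle (by positivity)
  -- pointwise bound on the right half
  have key2 : ∀ x ∈ Set.Icc m b, |f' x| ≤ M2 := by
    intro x hx
    have hbm : (0:ℝ) < b - m := by linarith
    set α : ℝ := (b - x) / (b - m) with hα
    have hαmem : α ∈ Set.Icc (0:ℝ) 1 :=
      ⟨div_nonneg (by linarith [hx.2]) hbm.le, (div_le_one hbm).2 (by linarith [hx.1])⟩
    have hxeq : α * m + (1 - α) * b = x := by
      rw [hα]; field_simp; ring
    have hle := hqc m hmab b ⟨hab.le, le_refl b⟩ α hαmem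
    rw [hxeq] at hle
    rw [hrpow_id x, hM2]
    exact Real.rpow_le_rpow (Real.rpow_nonneg (abs_nonneg _) _) hle (by positivity)
  -- set up kernels
  set c1 : ℝ := (5 * a + b) / 6 with hc1
  set c2 : ℝ := (a + 5 * b) / 6 with hc2
  have hac1 : a ≤ c1 := by rw [hc1]; linarith
  have hc1m : c1 ≤ m := by rw [hc1, hm]; linarith
  have hmc2 : m ≤ c2 := by rw [hc2, hm]; linarith
  have hc2b : c2 ≤ b := by rw [hc2]; linarith
  -- subsets of (c, d)
  have hsub1 : Set.uIcc a m ⊆ Set.Ioo c d := by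
    rw [Set.uIcc_of_le ham.le]
    exact fun x hx => ⟨lt_of_lt_of_le hca hx.1, lt_of_le_of_lt hx.2 (by linarith)⟩
  have hsub2 : Set.uIcc m b ⊆ Set.Ioo c d := by
    rw [Set.uIcc_of_le hmb.le]
    exact fun x hx => ⟨lt_of_lt_of_le (by linarith : c < m) hx.1, lt_of_le_of_lt hx.2 hbd⟩
  -- integrability
  have hint1 : IntervalIntegrable f' volume a m := hint.mono_set (by
    rw [Set.uIcc_of_le ham.le, Set.uIcc_of_le hab.le]
    exact Set.Icc_subset_Icc le_rfl hmb.le)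
  have hint2 : IntervalIntegrable f' volume m b := hint.mono_set (by
    rw [Set.uIcc_of_le hmb.le, Set.uIcc_of_le hab.le]
    exact Set.Icc_subset_Icc ham.le le_rfl)
  have hfc1 : ContinuousOn f (Set.uIcc a m) := fun x hx =>
    ((hf x (hsub1 hx)).continuousAt).continuousWithinAt
  have hfc2 : ContinuousOn f (Set.uIcc m b) := fun x hx =>
    ((hf x (hsub2 hx)).continuousAt).continuousWithinAt
  have hfint1 : IntervalIntegrable f volume a m := hfc1.intervalIntegrable
  have hfint2 : IntervalIntegrable f volume m b := hfc2.intervalIntegrable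
  -- integration by parts on each half
  have ibp1 : ∫ x in a..m, (x - c1) * f' x
      = (m - c1) * f m - (a - c1) * f a - ∫ x in a..m, f x := by
    have h := intervalIntegral.integral_mul_deriv_eq_deriv_mul
      (u := fun x => x - c1) (v := f) (u' := fun _ => (1:ℝ)) (v' := f')
      (fun x _ => (hasDerivAt_id x).sub_const c1)
      (fun x hx => hf x (hsub1 hx))
      intervalIntegrable_const hint1
    simpa using h
  have ibp2 : ∫ x in m..b, (x - c2) * f' x
      = (b - c2) * f b - (m - c2) * f m - ∫ x in m..b, f x := by
    have h := intervalIntegral.integral_mul_deriv_eq_deriv_mul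
      (u := fun x => x - c2) (v := f) (u' := fun _ => (1:ℝ)) (v' := f')
      (fun x _ => (hasDerivAt_id x).sub_const c2)
      (fun x hx => hf x (hsub2 hx))
      intervalIntegrable_const hint2
    simpa using h
  have hadd : (∫ x in a..m, f x) + ∫ x in m..b, f x = ∫ x in a..b, f x :=
    intervalIntegral.integral_add_adjacent_intervals hfint1 hfint2
  -- the Simpson identity
  have hid : (1 / 6) * (f a + 4 * f m + f b) - (1 / (b - a)) * ∫ x in a..b, f x
      = (1 / (b - a)) * ((∫ x in a..m, (x - c1) * f' x) + ∫ x in m..b, (x - c2) * f' x) := by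
    rw [ibp1, ibp2, ← hadd, hc1, hc2, hm]
    field_simp
    ring
  -- bound the two kernel integrals
  have habs1 : ∫ x in a..m, |x - c1| = 5 * (b - a) ^ 2 / 72 := by
    rw [abs_linear_integral a c1 m hac1 hc1m, hc1, hm]
    ring
  have habs2 : ∫ x in m..b, |x - c2| = 5 * (b - a) ^ 2 / 72 := by
    rw [abs_linear_integral m c2 b hmc2 hc2b, hc2, hm]
    ring
  have hkc1 : Continuous fun x : ℝ => x - c1 := continuous_id.sub continuous_const
  have hkc2 : Continuous fun x : ℝ => x - c2 := continuous_id.sub continuous_const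
  have bound1 : |∫ x in a..m, (x - c1) * f' x| ≤ M1 * (5 * (b - a) ^ 2 / 72) := by
    have hi : IntervalIntegrable (fun x => (x - c1) * f' x) volume a m :=
      hint1.continuousOn_mul hkc1.continuousOn
    calc |∫ x in a..m, (x - c1) * f' x| ≤ ∫ x in a..m, |(x - c1) * f' x| :=
          intervalIntegral.abs_integral_le_integral_abs ham.le
      _ ≤ ∫ x in a..m, |x - c1| * M1 := by
          apply intervalIntegral.integral_mono_on ham.le hi.abs
            ((hkc1.abs.intervalIntegrable a m).mul_const M1)
          intro x hx
          rw [abs_mul]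
          exact mul_le_mul_of_nonneg_left (key1 x hx) (abs_nonneg _)
      _ = (∫ x in a..m, |x - c1|) * M1 := intervalIntegral.integral_mul_const M1 _
      _ = M1 * (5 * (b - a) ^ 2 / 72) := by rw [habs1, mul_comm]
  have bound2 : |∫ x in m..b, (x - c2) * f' x| ≤ M2 * (5 * (b - a) ^ 2 / 72) := by
    have hi : IntervalIntegrable (fun x => (x - c2) * f' x) volume m b :=
      hint2.continuousOn_mul hkc2.continuousOn
    calc |∫ x in m..b, (x - c2) * f' x| ≤ ∫ x in m..b, |(x - c2) * f' x| :=
          intervalIntegral.abs_integral_le_integral_abs hmb.le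
      _ ≤ ∫ x in m..b, |x - c2| * M2 := by
          apply intervalIntegral.integral_mono_on hmb.le hi.abs
            ((hkc2.abs.intervalIntegrable m b).mul_const M2)
          intro x hx
          rw [abs_mul]
          exact mul_le_mul_of_nonneg_left (key2 x hx) (abs_nonneg _)
      _ = (∫ x in m..b, |x - c2|) * M2 := intervalIntegral.integral_mul_const M2 _
      _ = M2 * (5 * (b - a) ^ 2 / 72) := by rw [habs2, mul_comm]
  -- assemble
  rw [hid, abs_mul, abs_of_pos (by positivity : (0:ℝ) < 1 / (b - a))]
  have hS : |(∫ x in a..m, (x - c1) * f' x) + ∫ x in m..b, (x - c2) * f' x|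
      ≤ (M1 + M2) * (5 * (b - a) ^ 2 / 72) :=
    (abs_add_le _ _).trans (by linarith [bound1, bound2])
  calc (1 / (b - a)) * |(∫ x in a..m, (x - c1) * f' x) + ∫ x in m..b, (x - c2) * f' x|
      ≤ (1 / (b - a)) * ((M1 + M2) * (5 * (b - a) ^ 2 / 72)) := by
        exact mul_le_mul_of_nonneg_left hS (by positivity)
    _ = (b - a) / 12 * (5 / 6) * (M1 + M2) := by
        field_simp
        ring
    _ ≤ (b - a) / 12 * ((1 + 2 ^ (p + 1)) / (3 * (p + 1))) ^ (1 / p) * (M1 + M2) := by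
        apply mul_le_mul_of_nonneg_right _ (by linarith)
        exact mul_le_mul_of_nonneg_left (simpson_const_ge p hp1) (by linarith)
end

section
/- Let f be differentiable on an open interval containing [a,b] (a < b) with f' integrable, q > 1 with 1/p + 1/q = 1, and suppose |f'|^q is quasi-convex on [a,b]. Then the trapezoid inequality holds: |(f(a) + f(b))/2 − (1/(b−a)) ∫_a^b f(x) dx| ≤ ((b−a)/(4(p+1)^(1/p))) [ (max{|f'((a+b)/2)|^q, |f'(a)|^q})^(1/q) + (max{|f'((a+b)/2)|^q, |f'(b)|^q})^(1/q) ]. -/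
open MeasureTheory

set_option maxHeartbeats 1000000 in
theorem stmt_11 (f f' : ℝ → ℝ) (a b p q c d : ℝ) (hab : a < b)
    (hq : 1 < q) (hpq : 1 / p + 1 / q = 1)
    (hca : c < a) (hbd : b < d)
    (hf : ∀ x ∈ Set.Ioo c d, HasDerivAt f (f' x) x)
    (hint : IntervalIntegrable f' volume a b)
    (hqc : ∀ x ∈ Set.Icc a b, ∀ y ∈ Set.Icc a b, ∀ α ∈ Set.Icc (0:ℝ) 1,
      |f' (α * x + (1 - α) * y)| ^ q ≤ max (|f' x| ^ q) (|f' y| ^ q)) :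
    |(f a + f b) / 2 - (1 / (b - a)) * ∫ x in a..b, f x|
      ≤ (b - a) / (4 * (p + 1) ^ (1 / p)) *
          ((max (|f' ((a + b) / 2)| ^ q) (|f' a| ^ q)) ^ (1 / q)
            + (max (|f' ((a + b) / 2)| ^ q) (|f' b| ^ q)) ^ (1 / q)) := by
  set m : ℝ := (a + b) / 2 with hm
  have ham : a < m := by simp [hm]; linarith
  have hmb : m < b := by simp [hm]; linarith
  have hba : (0:ℝ) < b - a := by linarith
  have hq0 : (0:ℝ) < q := by linarith
  -- p > 1
  have hq1 : 1 / q < 1 := by rw [div_lt_one hq0]; exact hq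
  have hq2 : 0 < 1 / q := by positivity
  have hp0 : 0 < 1 / p := by linarith
  have hppos : 0 < p := one_div_pos.mp hp0
  have hp1 : 1 < p := by
    have : 1 / p < 1 := by linarith
    exact (div_lt_one hppos).mp this
  -- (p+1)^(1/p) ≤ 2
  have hbern : p + 1 ≤ (2:ℝ) ^ p := by
    have := one_add_mul_self_le_rpow_one_add (by norm_num : (-1:ℝ) ≤ 1) hp1.le
    norm_num at this
    linarith
  have hple2 : (p + 1) ^ (1 / p) ≤ 2 := by
    calc (p + 1) ^ (1 / p) ≤ ((2:ℝ) ^ p) ^ (1 / p) :=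
          Real.rpow_le_rpow (by positivity) hbern (by positivity)
      _ = 2 := by
          rw [← Real.rpow_mul (by norm_num), mul_one_div_cancel (ne_of_gt hppos),
            Real.rpow_one]
  have hpp : (0:ℝ) < (p + 1) ^ (1 / p) := by positivity
  set A : ℝ := (max (|f' m| ^ q) (|f' a| ^ q)) ^ (1 / q) with hA
  set B : ℝ := (max (|f' m| ^ q) (|f' b| ^ q)) ^ (1 / q) with hB
  have hAnn : 0 ≤ A := by positivity
  have hBnn : 0 ≤ B := by positivity
  have hmmem : m ∈ Set.Icc a b := ⟨ham.le, hmb.le⟩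
  -- rpow cancellation helper
  have hcancel : ∀ t : ℝ, (|t| ^ q) ^ (1 / q) = |t| := by
    intro t
    rw [← Real.rpow_mul (abs_nonneg t), mul_one_div_cancel (ne_of_gt hq0), Real.rpow_one]
  -- pointwise bounds
  have hAbd : ∀ x ∈ Set.Icc a m, |f' x| ≤ A := by
    intro x hx
    set α : ℝ := (x - a) / (m - a) with hα
    have hαm : α ∈ Set.Icc (0:ℝ) 1 := by
      constructor
      · apply div_nonneg (by linarith [hx.1]) (by linarith)
      · rw [div_le_one (by linarith)]; linarith [hx.2]
    have hx' : α * m + (1 - α) * a = x := by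
      have hne : m - a ≠ 0 := ne_of_gt (by linarith)
      have h2 : α * (m - a) = x - a := by rw [hα, div_mul_cancel₀ _ hne]
      linear_combination h2
    have := hqc m hmmem a ⟨le_refl a, hab.le⟩ α hαm
    rw [hx'] at this
    calc |f' x| = (|f' x| ^ q) ^ (1 / q) := (hcancel _).symm
      _ ≤ A := Real.rpow_le_rpow (by positivity) this (by positivity)
  have hBbd : ∀ x ∈ Set.Icc m b, |f' x| ≤ B := by
    intro x hx
    set α : ℝ := (b - x) / (b - m) with hα
    have hαm : α ∈ Set.Icc (0:ℝ) 1 := by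
      constructor
      · apply div_nonneg (by linarith [hx.2]) (by linarith)
      · rw [div_le_one (by linarith)]; linarith [hx.1]
    have hx' : α * m + (1 - α) * b = x := by
      have hne : b - m ≠ 0 := ne_of_gt (by linarith)
      have h2 : α * (b - m) = b - x := by rw [hα, div_mul_cancel₀ _ hne]
      linear_combination (-1 : ℝ) * h2
    have := hqc m hmmem b ⟨hab.le, le_refl b⟩ α hαm
    rw [hx'] at this
    calc |f' x| = (|f' x| ^ q) ^ (1 / q) := (hcancel _).symm
      _ ≤ B := Real.rpow_le_rpow (by positivity) this (by positivity)
  -- integration by parts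
  have hsub : Set.uIcc a b ⊆ Set.Ioo c d := by
    rw [Set.uIcc_of_le hab.le]
    exact fun x hx => ⟨lt_of_lt_of_le hca hx.1, lt_of_le_of_lt hx.2 hbd⟩
  have hibp : ∫ x in a..b, (x - m) * f' x
      = (b - m) * f b - (a - m) * f a - ∫ x in a..b, f x := by
    have h := intervalIntegral.integral_mul_deriv_eq_deriv_mul
      (u := fun x => x - m) (u' := fun _ => (1:ℝ)) (v := f) (v' := f')
      (fun x _ => (hasDerivAt_id x).sub_const m)
      (fun x hx => hf x (hsub hx))
      intervalIntegrable_const hint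
    simpa using h
  have heq : (f a + f b) / 2 - (1 / (b - a)) * ∫ x in a..b, f x
      = (1 / (b - a)) * ∫ x in a..b, (x - m) * f' x := by
    rw [hibp]
    field_simp
    ring
  -- integrability
  have hgint : IntervalIntegrable (fun x => (x - m) * f' x) volume a b :=
    hint.continuousOn_mul (by fun_prop)
  have habs : IntervalIntegrable (fun x => |(x - m) * f' x|) volume a b := hgint.abs
  have habs1 : IntervalIntegrable (fun x => |(x - m) * f' x|) volume a m :=
    habs.mono_set (by
      rw [Set.uIcc_of_le ham.le, Set.uIcc_of_le hab.le]
      exact Set.Icc_subset_Icc le_rfl hmb.le)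
  have habs2 : IntervalIntegrable (fun x => |(x - m) * f' x|) volume m b :=
    habs.mono_set (by
      rw [Set.uIcc_of_le hmb.le, Set.uIcc_of_le hab.le]
      exact Set.Icc_subset_Icc ham.le le_rfl)
  -- bound the two half integrals
  have hI1 : (∫ x in a..m, |(x - m) * f' x|) ≤ A * (m - a) ^ 2 / 2 := by
    have hmono : (∫ x in a..m, |(x - m) * f' x|) ≤ ∫ x in a..m, (m - x) * A := by
      apply intervalIntegral.integral_mono_on ham.le habs1
        ((intervalIntegrable_const.sub intervalIntegral.intervalIntegrable_id).mul_const A)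
      intro x hx
      rw [abs_mul, abs_of_nonpos (by linarith [hx.2] : x - m ≤ 0)]
      have := hAbd x hx
      have h1 : (0:ℝ) ≤ m - x := by linarith [hx.2]
      calc -(x - m) * |f' x| = (m - x) * |f' x| := by ring
        _ ≤ (m - x) * A := by nlinarith [abs_nonneg (f' x)]
    have hval : (∫ x in a..m, (m - x) * A) = A * (m - a) ^ 2 / 2 := by
      rw [intervalIntegral.integral_mul_const,
        intervalIntegral.integral_sub intervalIntegrable_const intervalIntegral.intervalIntegrable_id,
        intervalIntegral.integral_const]
      simp [smul_eq_mul]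
      ring
    linarith [hmono, hval.le, hval.ge]
  have hI2 : (∫ x in m..b, |(x - m) * f' x|) ≤ B * (b - m) ^ 2 / 2 := by
    have hmono : (∫ x in m..b, |(x - m) * f' x|) ≤ ∫ x in m..b, (x - m) * B := by
      apply intervalIntegral.integral_mono_on hmb.le habs2
        ((intervalIntegral.intervalIntegrable_id.sub intervalIntegrable_const).mul_const B)
      intro x hx
      rw [abs_mul, abs_of_nonneg (by linarith [hx.1] : (0:ℝ) ≤ x - m)]
      have := hBbd x hx
      have h1 : (0:ℝ) ≤ x - m := by linarith [hx.1]
      nlinarith [abs_nonneg (f' x)]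
    have hval : (∫ x in m..b, (x - m) * B) = B * (b - m) ^ 2 / 2 := by
      rw [intervalIntegral.integral_mul_const,
        intervalIntegral.integral_sub intervalIntegral.intervalIntegrable_id intervalIntegrable_const,
        intervalIntegral.integral_const]
      simp [smul_eq_mul]
      ring
    linarith [hmono, hval.le, hval.ge]
  have hsplit : (∫ x in a..b, |(x - m) * f' x|)
      = (∫ x in a..m, |(x - m) * f' x|) + ∫ x in m..b, |(x - m) * f' x| :=
    (intervalIntegral.integral_add_adjacent_intervals habs1 habs2).symm
  have hbound : |∫ x in a..b, (x - m) * f' x| ≤ (b - a) ^ 2 / 8 * (A + B) := by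
    calc |∫ x in a..b, (x - m) * f' x| ≤ ∫ x in a..b, |(x - m) * f' x| :=
          intervalIntegral.abs_integral_le_integral_abs hab.le
      _ = (∫ x in a..m, |(x - m) * f' x|) + ∫ x in m..b, |(x - m) * f' x| := hsplit
      _ ≤ A * (m - a) ^ 2 / 2 + B * (b - m) ^ 2 / 2 := add_le_add hI1 hI2
      _ = (b - a) ^ 2 / 8 * (A + B) := by
          have hma : m - a = (b - a) / 2 := by rw [hm]; ring
          have hbm : b - m = (b - a) / 2 := by rw [hm]; ring
          rw [hma, hbm]; ring
  -- combine
  rw [heq, abs_mul, abs_of_pos (by positivity : (0:ℝ) < 1 / (b - a))]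
  have hmain : 1 / (b - a) * |∫ x in a..b, (x - m) * f' x| ≤ (b - a) / 8 * (A + B) := by
    calc 1 / (b - a) * |∫ x in a..b, (x - m) * f' x|
        ≤ 1 / (b - a) * ((b - a) ^ 2 / 8 * (A + B)) := by
          apply mul_le_mul_of_nonneg_left hbound (by positivity)
      _ = (b - a) / 8 * (A + B) := by field_simp
  refine hmain.trans ?_
  apply mul_le_mul_of_nonneg_right _ (by positivity)
  rw [div_le_div_iff₀ (by norm_num) (by positivity)]
  nlinarith [hpp, hple2, hba]
end

section
/- Let f be differentiable on an open interval containing [a,b] (a < b) with f' integrable, q > 1 with 1/p + 1/q = 1, and suppose |f'|^q is quasi-convex on [a,b]. Then the midpoint inequality holds: |f((a+b)/2) − (1/(b−a)) ∫_a^b f(x) dx| ≤ ((b−a)/(4(p+1)^(1/p))) [ (max{|f'((a+b)/2)|^q, |f'(a)|^q})^(1/q) + (max{|f'((a+b)/2)|^q, |f'(b)|^q})^(1/q) ]. -/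
open MeasureTheory intervalIntegral

lemma aux_bound12 (f' k : ℝ → ℝ) (u v M : ℝ) (huv : u ≤ v)
    (hint : IntervalIntegrable f' volume u v) (hk : ContinuousOn k (Set.uIcc u v))
    (hbound : ∀ x ∈ Set.Icc u v, |f' x| ≤ M)
    (hkint : (∫ x in u..v, |k x|) = (v - u) ^ 2 / 2) :
    |∫ x in u..v, k x * f' x| ≤ M * ((v - u) ^ 2 / 2) := by
  have hI : IntervalIntegrable (fun x => k x * f' x) volume u v :=
    hint.continuousOn_mul hk
  calc |∫ x in u..v, k x * f' x| ≤ ∫ x in u..v, |k x * f' x| :=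
        intervalIntegral.abs_integral_le_integral_abs huv
    _ ≤ ∫ x in u..v, |k x| * M := by
        apply intervalIntegral.integral_mono_on huv hI.abs
        · exact ((hk.abs.mul continuousOn_const)).intervalIntegrable
        · intro x hx
          rw [abs_mul]
          exact mul_le_mul_of_nonneg_left (hbound x hx) (abs_nonneg _)
    _ = M * ((v - u) ^ 2 / 2) := by
        rw [intervalIntegral.integral_mul_const, hkint, mul_comm]

theorem stmt_12 (f f' : ℝ → ℝ) (a b p q c d : ℝ) (hab : a < b)
    (hq : 1 < q) (hpq : 1 / p + 1 / q = 1)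
    (hca : c < a) (hbd : b < d)
    (hf : ∀ x ∈ Set.Ioo c d, HasDerivAt f (f' x) x)
    (hint : IntervalIntegrable f' volume a b)
    (hqc : ∀ x ∈ Set.Icc a b, ∀ y ∈ Set.Icc a b, ∀ α ∈ Set.Icc (0:ℝ) 1,
      |f' (α * x + (1 - α) * y)| ^ q ≤ max (|f' x| ^ q) (|f' y| ^ q)) :
    |f ((a + b) / 2) - (1 / (b - a)) * ∫ x in a..b, f x|
      ≤ (b - a) / (4 * (p + 1) ^ (1 / p)) *
          ((max (|f' ((a + b) / 2)| ^ q) (|f' a| ^ q)) ^ (1 / q)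
            + (max (|f' ((a + b) / 2)| ^ q) (|f' b| ^ q)) ^ (1 / q)) := by
  set m := (a + b) / 2 with hm_def
  have ham : a < m := by rw [hm_def]; linarith
  have hmb : m < b := by rw [hm_def]; linarith
  have hq0 : (0:ℝ) < q := by linarith
  -- basic facts about p
  have hq1 : 1 / q < 1 := by rw [div_lt_one hq0]; exact hq
  have hq0' : 0 < 1 / q := by positivity
  have hp1 : 1 / p = 1 - 1 / q := by linarith
  have hpinv : 0 < 1 / p := by rw [hp1]; linarith
  have hp0 : 0 < p := one_div_pos.mp hpinv
  have hp : 1 < p := by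
    have := (div_lt_one hp0).mp (by rw [hp1]; linarith : 1 / p < 1)
    exact this
  -- membership of interval in Ioo c d
  have hsub : Set.Icc a b ⊆ Set.Ioo c d := fun x hx => ⟨lt_of_lt_of_le hca hx.1, lt_of_le_of_lt hx.2 hbd⟩
  have hmem : m ∈ Set.Icc a b := ⟨ham.le, hmb.le⟩
  -- integrability of f' on subintervals
  have hint1 : IntervalIntegrable f' volume a m :=
    hint.mono_set (Set.uIcc_subset_uIcc (by simp [Set.mem_uIcc, le_refl, hab.le]) (by simp [Set.mem_uIcc, ham.le, hmb.le]))
  have hint2 : IntervalIntegrable f' volume m b :=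
    hint.mono_set (Set.uIcc_subset_uIcc (by simp [Set.mem_uIcc, ham.le, hmb.le]) (by simp [Set.mem_uIcc, hab.le]))
  -- f is continuous on Icc a b hence interval integrable
  have hfc : ContinuousOn f (Set.Icc a b) := fun x hx =>
    ((hf x (hsub hx)).continuousAt).continuousWithinAt
  have hfint1 : IntervalIntegrable f volume a m :=
    (hfc.mono (by rw [Set.uIcc_of_le ham.le]; exact Set.Icc_subset_Icc le_rfl hmb.le)).intervalIntegrable
  have hfint2 : IntervalIntegrable f volume m b :=
    (hfc.mono (by rw [Set.uIcc_of_le hmb.le]; exact Set.Icc_subset_Icc ham.le le_rfl)).intervalIntegrable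
  -- integration by parts on [a, m]
  have h1 : ∫ x in a..m, (x - a) * f' x
      = (m - a) * f m - (a - a) * f a - ∫ x in a..m, 1 * f x := by
    apply intervalIntegral.integral_mul_deriv_eq_deriv_mul
    · intro x hx; exact (hasDerivAt_id x).sub_const a
    · intro x hx
      rw [Set.uIcc_of_le ham.le] at hx
      exact hf x (hsub ⟨hx.1, hx.2.trans hmb.le⟩)
    · exact intervalIntegrable_const
    · exact hint1
  have h2 : ∫ x in m..b, (x - b) * f' x
      = (b - b) * f b - (m - b) * f m - ∫ x in m..b, 1 * f x := by
    apply intervalIntegral.integral_mul_deriv_eq_deriv_mul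
    · intro x hx; exact (hasDerivAt_id x).sub_const b
    · intro x hx
      rw [Set.uIcc_of_le hmb.le] at hx
      exact hf x (hsub ⟨ham.le.trans hx.1, hx.2⟩)
    · exact intervalIntegrable_const
    · exact hint2
  simp only [one_mul, sub_self, zero_mul, sub_zero, zero_sub] at h1 h2
  have hadd : (∫ x in a..m, f x) + ∫ x in m..b, f x = ∫ x in a..b, f x :=
    intervalIntegral.integral_add_adjacent_intervals hfint1 hfint2
  -- the key identity
  have key : (b - a) * f m - (∫ x in a..b, f x)
      = (∫ x in a..m, (x - a) * f' x) + ∫ x in m..b, (x - b) * f' x := by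
    rw [h1, h2, ← hadd]; ring
  -- pointwise bounds from quasi-convexity
  set M1 : ℝ := max (|f' m| ^ q) (|f' a| ^ q) with hM1
  set M2 : ℝ := max (|f' m| ^ q) (|f' b| ^ q) with hM2
  have hM1nn : 0 ≤ M1 := le_max_of_le_left (Real.rpow_nonneg (abs_nonneg _) _)
  have hM2nn : 0 ≤ M2 := le_max_of_le_left (Real.rpow_nonneg (abs_nonneg _) _)
  have hgen : ∀ u w x : ℝ, w - u ≠ 0 →
      (x - u) / (w - u) * w + (1 - (x - u) / (w - u)) * u = x := by
    intro u w x h; field_simp; ring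
  have habs : ∀ x : ℝ, ∀ N : ℝ, |f' x| ^ q ≤ N → |f' x| ≤ N ^ (1 / q) := by
    intro x N h
    calc |f' x| = (|f' x| ^ q) ^ (1 / q) := by
          rw [← Real.rpow_mul (abs_nonneg _), mul_one_div_cancel hq0.ne', Real.rpow_one]
      _ ≤ N ^ (1 / q) := Real.rpow_le_rpow (Real.rpow_nonneg (abs_nonneg _) _) h (by positivity)
  have hb1 : ∀ x ∈ Set.Icc a m, |f' x| ≤ M1 ^ (1 / q) := by
    intro x hx
    apply habs
    have hα : (x - a) / (m - a) ∈ Set.Icc (0:ℝ) 1 := by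
      constructor
      · apply div_nonneg (by linarith [hx.1]) (by linarith)
      · rw [div_le_one (by linarith)]; linarith [hx.2]
    have h := hqc m hmem a ⟨le_rfl, hab.le⟩ _ hα
    rwa [hgen a m x (by linarith)] at h
  have hb2 : ∀ x ∈ Set.Icc m b, |f' x| ≤ M2 ^ (1 / q) := by
    intro x hx
    apply habs
    have hα : (b - x) / (b - m) ∈ Set.Icc (0:ℝ) 1 := by
      constructor
      · apply div_nonneg (by linarith [hx.2]) (by linarith)
      · rw [div_le_one (by linarith)]; linarith [hx.1]
    have h := hqc m hmem b ⟨hab.le, le_rfl⟩ _ hα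
    have e2 : (b - x) / (b - m) = (x - b) / (m - b) := by
      rw [← neg_div_neg_eq]; ring_nf
    rw [e2, hgen b m x (by linarith)] at h
    exact h
  -- kernel integrals
  have hk1 : (∫ x in a..m, |x - a|) = (m - a) ^ 2 / 2 := by
    have e : ∀ x ∈ Set.uIcc a m, |x - a| = x - a := by
      intro x hx
      rw [Set.uIcc_of_le ham.le] at hx
      exact abs_of_nonneg (by linarith [hx.1])
    rw [intervalIntegral.integral_congr e]
    have : (∫ x in a..m, (x - a)) = (∫ x in a..m, x) - ∫ x in a..m, (a:ℝ) :=
      intervalIntegral.integral_sub intervalIntegral.intervalIntegrable_id intervalIntegrable_const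
    rw [this, integral_id, intervalIntegral.integral_const, smul_eq_mul]
    ring
  have hk2 : (∫ x in m..b, |x - b|) = (b - m) ^ 2 / 2 := by
    have e : ∀ x ∈ Set.uIcc m b, |x - b| = b - x := by
      intro x hx
      rw [Set.uIcc_of_le hmb.le] at hx
      rw [abs_sub_comm]
      exact abs_of_nonneg (by linarith [hx.2])
    rw [intervalIntegral.integral_congr e]
    have : (∫ x in m..b, (b - x)) = (∫ x in m..b, (b:ℝ)) - ∫ x in m..b, x :=
      intervalIntegral.integral_sub intervalIntegrable_const intervalIntegral.intervalIntegrable_id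
    rw [this, integral_id, intervalIntegral.integral_const, smul_eq_mul]
    ring
  -- bounds on the two integrals
  have B1 : |∫ x in a..m, (x - a) * f' x| ≤ M1 ^ (1 / q) * ((m - a) ^ 2 / 2) :=
    aux_bound12 f' (fun x => x - a) a m _ ham.le hint1
      ((continuousOn_id.sub continuousOn_const)) hb1 hk1
  have B2 : |∫ x in m..b, (x - b) * f' x| ≤ M2 ^ (1 / q) * ((b - m) ^ 2 / 2) :=
    aux_bound12 f' (fun x => x - b) m b _ hmb.le hint2
      ((continuousOn_id.sub continuousOn_const)) hb2 hk2
  have hma : (m - a) ^ 2 / 2 = (b - a) ^ 2 / 8 := by rw [hm_def]; ring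
  have hbm : (b - m) ^ 2 / 2 = (b - a) ^ 2 / 8 := by rw [hm_def]; ring
  -- combine
  have hba : (0:ℝ) < b - a := by linarith
  have step : |f m - (1 / (b - a)) * ∫ x in a..b, f x|
      ≤ (b - a) / 8 * (M1 ^ (1 / q) + M2 ^ (1 / q)) := by
    have e : f m - (1 / (b - a)) * ∫ x in a..b, f x
        = (1 / (b - a)) * ((b - a) * f m - ∫ x in a..b, f x) := by
      field_simp
    rw [e, abs_mul, abs_of_pos (by positivity : (0:ℝ) < 1 / (b - a)), key]
    calc (1 / (b - a)) * |(∫ x in a..m, (x - a) * f' x) + ∫ x in m..b, (x - b) * f' x|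
        ≤ (1 / (b - a)) * (M1 ^ (1 / q) * ((m - a) ^ 2 / 2) + M2 ^ (1 / q) * ((b - m) ^ 2 / 2)) :=
          mul_le_mul_of_nonneg_left ((abs_add_le _ _).trans (add_le_add B1 B2)) (by positivity)
      _ = (b - a) / 8 * (M1 ^ (1 / q) + M2 ^ (1 / q)) := by
          rw [hma, hbm]; field_simp
  -- compare constants
  have hber : p + 1 ≤ (2:ℝ) ^ p := by
    have := one_add_mul_self_le_rpow_one_add (by norm_num : (-1:ℝ) ≤ 1) hp.le
    norm_num at this
    linarith
  have hple : (p + 1) ^ (1 / p) ≤ 2 := by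
    calc (p + 1) ^ (1 / p) ≤ ((2:ℝ) ^ p) ^ (1 / p) :=
          Real.rpow_le_rpow (by linarith) hber (by positivity)
      _ = 2 := by
          rw [← Real.rpow_mul (by norm_num), mul_one_div_cancel hp0.ne', Real.rpow_one]
  have hppos : (0:ℝ) < (p + 1) ^ (1 / p) := Real.rpow_pos_of_pos (by linarith) _
  have hconst : (b - a) / 8 ≤ (b - a) / (4 * (p + 1) ^ (1 / p)) := by
    apply div_le_div_of_nonneg_left hba.le (by positivity)
    linarith
  calc |f m - (1 / (b - a)) * ∫ x in a..b, f x|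
      ≤ (b - a) / 8 * (M1 ^ (1 / q) + M2 ^ (1 / q)) := step
    _ ≤ (b - a) / (4 * (p + 1) ^ (1 / p)) * (M1 ^ (1 / q) + M2 ^ (1 / q)) := by
        apply mul_le_mul_of_nonneg_right hconst
        positivity
end

section
/- Let a < b be real numbers, n ∈ ℕ with n ≥ 2, θ, λ ∈ [0,1], and q ≥ 1. Then |(1−θ)(λ a^n + (1−λ) b^n) + θ ((1−λ)a + λb)^n − (b^(n+1) − a^(n+1))/((n+1)(b−a))| ≤ (b−a)(θ² − θ + 1/2) n [ λ² (max{|a|^((n−1)q), |(1−λ)a + λb|^((n−1)q)})^(1/q) + (1−λ)² (max{|b|^((n−1)q), |(1−λ)a + λb|^((n−1)q)})^(1/q) ]. -/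
lemma key_val13 (a x c : ℝ) (m : ℕ) :
    ∫ t in a..x, (t - c) * ((m+1:ℕ) * t ^ m)
      = ((m:ℝ)+1)/((m:ℝ)+2) * (x^(m+2) - a^(m+2)) - c * (x^(m+1) - a^(m+1)) := by
  have h1 : ∀ t : ℝ, (t - c) * ((m+1:ℕ) * t ^ m)
      = ((m:ℝ)+1) * t^(m+1) - c * ((m:ℝ)+1) * t^m := by
    intro t; push_cast; ring
  simp_rw [h1]
  rw [intervalIntegral.integral_sub, intervalIntegral.integral_const_mul,
    intervalIntegral.integral_const_mul, integral_pow, integral_pow]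
  · push_cast; field_simp; ring
  · exact ((continuous_const.mul (continuous_pow _)).intervalIntegrable _ _)
  · exact ((continuous_const.mul (continuous_pow _)).intervalIntegrable _ _)

lemma abs_int13 (a x c : ℝ) (hac : a ≤ c) (hcx : c ≤ x) :
    ∫ t in a..x, |t - c| = ((c-a)^2 + (x-c)^2)/2 := by
  rw [← intervalIntegral.integral_add_adjacent_intervals (b := c)
    ((show Continuous fun t : ℝ => |t - c| from ((continuous_id').sub continuous_const).abs).intervalIntegrable _ _)
    ((show Continuous fun t : ℝ => |t - c| from ((continuous_id').sub continuous_const).abs).intervalIntegrable _ _)]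
  have h1 : ∫ t in a..c, |t - c| = ∫ t in a..c, (c - t) := by
    apply intervalIntegral.integral_congr
    intro t ht
    rw [Set.uIcc_of_le hac] at ht
    show |t - c| = c - t
    rw [abs_of_nonpos (by linarith [ht.2])]; ring
  have h2 : ∫ t in c..x, |t - c| = ∫ t in c..x, (t - c) := by
    apply intervalIntegral.integral_congr
    intro t ht
    rw [Set.uIcc_of_le hcx] at ht
    show |t - c| = t - c
    rw [abs_of_nonneg (by linarith [ht.1])]
  rw [h1, h2]
  rw [intervalIntegral.integral_sub (intervalIntegrable_const) (intervalIntegral.intervalIntegrable_id),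
    intervalIntegral.integral_sub (intervalIntegral.intervalIntegrable_id) (intervalIntegrable_const)]
  simp [integral_id]
  ring

lemma key_bound13 (a x c M : ℝ) (m : ℕ) (hac : a ≤ c) (hcx : c ≤ x)
    (hM : ∀ t ∈ Set.Icc a x, |t|^m ≤ M) :
    |∫ t in a..x, (t - c) * ((m+1:ℕ) * t ^ m)|
      ≤ ((m:ℝ)+1) * M * (((c-a)^2 + (x-c)^2)/2) := by
  have hax : a ≤ x := hac.trans hcx
  have hcont : Continuous fun t : ℝ => (t - c) * ((m+1:ℕ) * t ^ m) :=
    ((continuous_id').sub continuous_const).mul (continuous_const.mul (continuous_pow _))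
  calc |∫ t in a..x, (t - c) * ((m+1:ℕ) * t ^ m)|
      ≤ ∫ t in a..x, |(t - c) * ((m+1:ℕ) * t ^ m)| :=
        intervalIntegral.abs_integral_le_integral_abs hax
    _ ≤ ∫ t in a..x, |t - c| * (((m:ℝ)+1) * M) := by
        apply intervalIntegral.integral_mono_on hax
        · exact hcont.abs.intervalIntegrable _ _
        · exact (((continuous_id').sub continuous_const).abs.mul continuous_const).intervalIntegrable _ _
        · intro t ht
          rw [abs_mul, abs_mul, abs_pow,
            abs_of_nonneg (by positivity : (0:ℝ) ≤ ((m+1:ℕ):ℝ))]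
          push_cast
          exact mul_le_mul_of_nonneg_left
            (mul_le_mul_of_nonneg_left (hM t ht) (by positivity)) (abs_nonneg _)
    _ = ((m:ℝ)+1) * M * (((c-a)^2 + (x-c)^2)/2) := by
        rw [intervalIntegral.integral_mul_const, abs_int13 a x c hac hcx]; ring

lemma rhs_simp13 (u v q : ℝ) (hu : 0 ≤ u) (hv : 0 ≤ v) (hq : 1 ≤ q) (m : ℕ) :
    (max (u ^ ((m:ℝ)*q)) (v ^ ((m:ℝ)*q))) ^ (1/q) = (max u v)^m := by
  have hq0 : 0 < q := lt_of_lt_of_le one_pos hq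
  have h : ∀ w:ℝ, 0 ≤ w → w ^ ((m:ℝ)*q) = (w^m : ℝ) ^ q := by
    intro w hw; rw [Real.rpow_mul hw, Real.rpow_natCast]
  rw [h u hu, h v hv]
  have hmax : max ((u^m:ℝ)^q) (((v^m):ℝ)^q) = (((max u v)^m : ℝ))^q := by
    rcases le_total u v with h'|h'
    · rw [max_eq_right h', max_eq_right
        (Real.rpow_le_rpow (pow_nonneg hu m) (pow_le_pow_left₀ hu h' m) hq0.le)]
    · rw [max_eq_left h', max_eq_left
        (Real.rpow_le_rpow (pow_nonneg hv m) (pow_le_pow_left₀ hv h' m) hq0.le)]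
  rw [hmax, ← Real.rpow_natCast (max u v) m,
    ← Real.rpow_mul (le_trans hu (le_max_left u v)),
    ← Real.rpow_mul (le_trans hu (le_max_left u v)),
    mul_assoc, mul_one_div_cancel hq0.ne', mul_one]

lemma identity13 (a b x θ lam : ℝ) (m : ℕ) (hab : a < b) :
    (1-θ)*(lam*a^(m+1) + (1-lam)*b^(m+1)) + θ*x^(m+1)
      - (b^(m+1+1) - a^(m+1+1))/(((((m+1:ℕ)):ℝ)+1)*(b-a))
    = ((((m:ℝ)+1)/((m:ℝ)+2)*(x^(m+2)-a^(m+2))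
          - (a + (1-θ)*lam*(b-a))*(x^(m+1)-a^(m+1)))
      + (((m:ℝ)+1)/((m:ℝ)+2)*(b^(m+2)-x^(m+2))
          - (b - (1-θ)*(1-lam)*(b-a))*(b^(m+1)-x^(m+1)))) / (b-a) := by
  have hba : b - a ≠ 0 := sub_ne_zero.2 hab.ne'
  have h2 : ((m:ℝ)+2) ≠ 0 := by positivity
  push_cast
  field_simp
  ring

theorem stmt_13 (a b θ lam q : ℝ) (n : ℕ) (hab : a < b) (hn : 2 ≤ n)
    (hθ : θ ∈ Set.Icc (0:ℝ) 1) (hlam : lam ∈ Set.Icc (0:ℝ) 1) (hq : 1 ≤ q) :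
    |(1 - θ) * (lam * a ^ n + (1 - lam) * b ^ n) + θ * ((1 - lam) * a + lam * b) ^ n
        - (b ^ (n + 1) - a ^ (n + 1)) / ((n + 1) * (b - a))|
      ≤ (b - a) * (θ ^ 2 - θ + 1 / 2) * n *
          (lam ^ 2 * (max (|a| ^ (((n : ℝ) - 1) * q)) (|(1 - lam) * a + lam * b| ^ (((n : ℝ) - 1) * q))) ^ (1 / q)
            + (1 - lam) ^ 2 * (max (|b| ^ (((n : ℝ) - 1) * q)) (|(1 - lam) * a + lam * b| ^ (((n : ℝ) - 1) * q))) ^ (1 / q)) := by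
  obtain ⟨m, rfl⟩ : ∃ m, n = m + 1 := ⟨n - 1, by omega⟩
  obtain ⟨hθ0, hθ1⟩ := hθ
  obtain ⟨hl0, hl1⟩ := hlam
  have hba : (0:ℝ) < b - a := sub_pos.2 hab
  set x : ℝ := (1 - lam) * a + lam * b with hxdef
  have hax : a ≤ x := by nlinarith
  have hxb : x ≤ b := by nlinarith
  set c1 : ℝ := a + (1-θ)*lam*(b-a) with hc1
  set c2 : ℝ := b - (1-θ)*(1-lam)*(b-a) with hc2
  have hac1 : a ≤ c1 := by nlinarith
  have hc1x : c1 ≤ x := by rw [hc1, hxdef]; nlinarith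
  have hxc2 : x ≤ c2 := by rw [hc2, hxdef]; nlinarith
  have hc2b : c2 ≤ b := by nlinarith
  -- exponent rewrite
  have hexp : ((m + 1 : ℕ) : ℝ) - 1 = (m : ℝ) := by push_cast; ring
  rw [hexp, rhs_simp13 _ _ q (abs_nonneg a) (abs_nonneg x) hq m,
    rhs_simp13 _ _ q (abs_nonneg b) (abs_nonneg x) hq m]
  set M1 : ℝ := (max |a| |x|)^m with hM1
  set M2 : ℝ := (max |b| |x|)^m with hM2
  have hMa : ∀ t ∈ Set.Icc a x, |t|^m ≤ M1 := by
    intro t ht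
    refine pow_le_pow_left₀ (abs_nonneg t) (abs_le.2 ⟨?_, ?_⟩) m
    · calc -(max |a| |x|) ≤ -|a| := by simp [le_max_left]
        _ ≤ a := neg_abs_le a
        _ ≤ t := ht.1
    · calc t ≤ x := ht.2
        _ ≤ |x| := le_abs_self x
        _ ≤ max |a| |x| := le_max_right _ _
  have hMb : ∀ t ∈ Set.Icc x b, |t|^m ≤ M2 := by
    intro t ht
    refine pow_le_pow_left₀ (abs_nonneg t) (abs_le.2 ⟨?_, ?_⟩) m
    · calc -(max |b| |x|) ≤ -|x| := by simp [le_max_right]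
        _ ≤ x := neg_abs_le x
        _ ≤ t := ht.1
    · calc t ≤ b := ht.2
        _ ≤ |b| := le_abs_self b
        _ ≤ max |b| |x| := le_max_left _ _
  have hB1 := key_bound13 a x c1 M1 m hac1 hc1x hMa
  have hB2 := key_bound13 x b c2 M2 m hxc2 hc2b hMb
  rw [key_val13] at hB1
  rw [key_val13] at hB2
  have hEq : (1 - θ) * (lam * a ^ (m+1) + (1 - lam) * b ^ (m+1)) + θ * x ^ (m+1)
        - (b ^ (m + 1 + 1) - a ^ (m + 1 + 1)) / ((((m+1:ℕ)):ℝ) + 1) / (b - a)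
      = ((((m:ℝ)+1)/((m:ℝ)+2)*(x^(m+2)-a^(m+2)) - c1*(x^(m+1)-a^(m+1)))
        + (((m:ℝ)+1)/((m:ℝ)+2)*(b^(m+2)-x^(m+2)) - c2*(b^(m+1)-x^(m+1)))) / (b-a) := by
    rw [div_div, hc1, hc2]
    exact identity13 a b x θ lam m hab
  have key : |(1 - θ) * (lam * a ^ (m+1) + (1 - lam) * b ^ (m+1)) + θ * x ^ (m+1)
        - (b ^ (m + 1 + 1) - a ^ (m + 1 + 1)) / (((((m+1:ℕ)):ℝ) + 1) * (b - a))|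
      ≤ (b - a) * (θ ^ 2 - θ + 1 / 2) * ((m+1:ℕ):ℝ) * (lam ^ 2 * M1 + (1 - lam) ^ 2 * M2) := by
    rw [← div_div, hEq, abs_div, abs_of_pos hba]
    have hstep : |(((m:ℝ)+1)/((m:ℝ)+2)*(x^(m+2)-a^(m+2)) - c1*(x^(m+1)-a^(m+1)))
        + (((m:ℝ)+1)/((m:ℝ)+2)*(b^(m+2)-x^(m+2)) - c2*(b^(m+1)-x^(m+1)))|
        ≤ ((m:ℝ)+1) * M1 * (((c1-a)^2 + (x-c1)^2)/2)
          + ((m:ℝ)+1) * M2 * (((c2-x)^2 + (b-c2)^2)/2) :=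
      le_trans (abs_add_le _ _) (add_le_add hB1 hB2)
    have hq1 : ((c1-a)^2 + (x-c1)^2)/2 = lam^2 * (b-a)^2 * (θ^2 - θ + 1/2) := by
      rw [hc1, hxdef]; ring
    have hq2 : ((c2-x)^2 + (b-c2)^2)/2 = (1-lam)^2 * (b-a)^2 * (θ^2 - θ + 1/2) := by
      rw [hc2, hxdef]; ring
    rw [hq1, hq2] at hstep
    rw [div_le_iff₀ hba]
    calc _ ≤ ((m:ℝ)+1) * M1 * (lam^2 * (b-a)^2 * (θ^2 - θ + 1/2))
          + ((m:ℝ)+1) * M2 * ((1-lam)^2 * (b-a)^2 * (θ^2 - θ + 1/2)) := hstep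
      _ = (b - a) * (θ ^ 2 - θ + 1 / 2) * ((m+1:ℕ):ℝ)
            * (lam ^ 2 * M1 + (1 - lam) ^ 2 * M2) * (b - a) := by push_cast; ring
  exact_mod_cast key
end

section
/- Let a < b be real numbers, n ∈ ℕ with n ≥ 2, θ, λ ∈ [0,1], and q > 1 with 1/p + 1/q = 1. Then |(1−θ)(λ a^n + (1−λ) b^n) + θ ((1−λ)a + λb)^n − (b^(n+1) − a^(n+1))/((n+1)(b−a))| ≤ (b−a) ((θ^(p+1) + (1−θ)^(p+1))/(p+1))^(1/p) n [ λ² (max{|a|^((n−1)q), |(1−λ)a + λb|^((n−1)q)})^(1/q) + (1−λ)² (max{|b|^((n−1)q), |(1−λ)a + λb|^((n−1)q)})^(1/q) ]. -/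
open intervalIntegral MeasureTheory

lemma aux_ftc (c d θ : ℝ) (n : ℕ) :
    (1 - θ) * c ^ n + θ * d ^ n =
      (∫ t in (0:ℝ)..1, (t * c + (1 - t) * d) ^ n)
      + (c - d) * ∫ t in (0:ℝ)..1, (t - θ) * ((n:ℝ) * (t * c + (1 - t) * d) ^ (n - 1)) := by
  have hlin : ∀ t : ℝ, HasDerivAt (fun t : ℝ => t * c + (1 - t) * d) (c - d) t := by
    intro t
    have h := ((hasDerivAt_id t).mul_const c).add
      (((hasDerivAt_const t (1:ℝ)).sub (hasDerivAt_id t)).mul_const d)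
    exact h.congr_deriv (by ring)
  have hF : ∀ t : ℝ, HasDerivAt (fun t : ℝ => (t - θ) * (t * c + (1 - t) * d) ^ n)
      ((t * c + (1 - t) * d) ^ n
        + ((t - θ) * ((n:ℝ) * (t * c + (1 - t) * d) ^ (n - 1))) * (c - d)) t := by
    intro t
    have h := ((hasDerivAt_id t).sub_const θ).mul ((hlin t).pow n)
    exact h.congr_deriv (by simp only [id_eq, Pi.pow_apply]; ring)
  have hc1 : Continuous fun t : ℝ => (t * c + (1 - t) * d) ^ n := by fun_prop
  have hc2 : Continuous fun t : ℝ => ((t - θ) * ((n:ℝ) * (t * c + (1 - t) * d) ^ (n - 1))) * (c - d) := by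
    fun_prop
  have h1 : (∫ t in (0:ℝ)..1, ((t * c + (1 - t) * d) ^ n
      + ((t - θ) * ((n:ℝ) * (t * c + (1 - t) * d) ^ (n - 1))) * (c - d)))
      = (1 - θ) * c ^ n + θ * d ^ n := by
    rw [intervalIntegral.integral_eq_sub_of_hasDerivAt (fun t _ => hF t)
      ((hc1.add hc2).intervalIntegrable 0 1)]
    norm_num
  rw [← h1, intervalIntegral.integral_add (hc1.intervalIntegrable 0 1)
    (hc2.intervalIntegrable 0 1), intervalIntegral.integral_mul_const]
  ring

lemma aux_mean (c d : ℝ) (n : ℕ) :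
    ((n:ℝ) + 1) * ((c - d) * (∫ t in (0:ℝ)..1, (t * c + (1 - t) * d) ^ n))
      = c ^ (n + 1) - d ^ (n + 1) := by
  have hlin : ∀ t : ℝ, HasDerivAt (fun t : ℝ => t * c + (1 - t) * d) (c - d) t := by
    intro t
    have h := ((hasDerivAt_id t).mul_const c).add
      (((hasDerivAt_const t (1:ℝ)).sub (hasDerivAt_id t)).mul_const d)
    exact h.congr_deriv (by ring)
  have hG : ∀ t : ℝ, HasDerivAt (fun t : ℝ => (t * c + (1 - t) * d) ^ (n + 1) / ((n:ℝ) + 1))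
      ((t * c + (1 - t) * d) ^ n * (c - d)) t := by
    intro t
    have h := ((hlin t).pow (n + 1)).div_const ((n:ℝ) + 1)
    refine h.congr_deriv ?_
    have hne : ((n:ℝ) + 1) ≠ 0 := by positivity
    field_simp
    push_cast [Nat.add_sub_cancel, Nat.add_sub_cancel_left]
    ring
  have hc1 : Continuous fun t : ℝ => (t * c + (1 - t) * d) ^ n * (c - d) := by fun_prop
  have h1 := intervalIntegral.integral_eq_sub_of_hasDerivAt
    (fun t (_ : t ∈ Set.uIcc (0:ℝ) 1) => hG t) (hc1.intervalIntegrable 0 1)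
  rw [intervalIntegral.integral_mul_const] at h1
  have hne : ((n:ℝ) + 1) ≠ 0 := by positivity
  norm_num at h1
  field_simp at h1 ⊢
  have hI : (∫ t in (0:ℝ)..1, (c * t + d * (1 - t)) ^ n) = ∫ x in (0:ℝ)..1, (x * c + (1 - x) * d) ^ n := by
    congr 1; ext t; ring
  linear_combination h1 + (c - d) * ((n:ℝ) + 1) * hI

lemma aux_rpow_int (θ p : ℝ) (hθ0 : 0 ≤ θ) (hθ1 : θ ≤ 1) (hp : 1 < p) :
    (∫ t in (0:ℝ)..1, |t - θ| ^ p) = (θ ^ (p+1) + (1-θ) ^ (p+1)) / (p+1) := by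
  have hp0 : (0:ℝ) < p := by linarith
  have hcont : Continuous fun t : ℝ => |t - θ| ^ p :=
    (continuous_id.sub continuous_const).abs.rpow_const (fun x => Or.inr hp0.le)
  have hsplit := intervalIntegral.integral_add_adjacent_intervals
    (hcont.intervalIntegrable (μ := volume) 0 θ) (hcont.intervalIntegrable (μ := volume) θ 1)
  have h1 : (∫ t in (0:ℝ)..θ, |t - θ| ^ p) = θ ^ (p+1) / (p+1) := by
    have e1 : (∫ t in (0:ℝ)..θ, |t - θ| ^ p) = ∫ t in (0:ℝ)..θ, (θ - t) ^ p := by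
      apply intervalIntegral.integral_congr
      intro t ht
      rw [Set.uIcc_of_le hθ0] at ht
      show |t - θ| ^ p = (θ - t) ^ p
      rw [abs_of_nonpos (by linarith [ht.2]), neg_sub]
    rw [e1]
    have e2 := intervalIntegral.integral_comp_sub_left (a := (0:ℝ)) (b := θ)
      (fun s => s ^ p) θ
    simp only [sub_self, sub_zero] at e2
    rw [e2, integral_rpow (Or.inl (by linarith))]
    rw [Real.zero_rpow (by linarith), sub_zero]
  have h2 : (∫ t in θ..(1:ℝ), |t - θ| ^ p) = (1-θ) ^ (p+1) / (p+1) := by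
    have e1 : (∫ t in θ..(1:ℝ), |t - θ| ^ p) = ∫ t in θ..(1:ℝ), (t - θ) ^ p := by
      apply intervalIntegral.integral_congr
      intro t ht
      rw [Set.uIcc_of_le hθ1] at ht
      show |t - θ| ^ p = (t - θ) ^ p
      rw [abs_of_nonneg (by linarith [ht.1])]
    rw [e1]
    have e2 := intervalIntegral.integral_comp_sub_right (a := θ) (b := (1:ℝ))
      (fun s => s ^ p) θ
    simp only [sub_self] at e2
    rw [e2, integral_rpow (Or.inl (by linarith))]
    rw [Real.zero_rpow (by linarith), sub_zero]
  rw [← hsplit, h1, h2]; ring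

lemma aux_K (θ p q : ℝ) (hθ0 : 0 ≤ θ) (hθ1 : θ ≤ 1) (hpq : Real.HolderConjugate p q) :
    (∫ t in (0:ℝ)..1, |t - θ|) ≤ ((θ ^ (p+1) + (1-θ) ^ (p+1)) / (p+1)) ^ (1/p) := by
  have hp := hpq.lt
  set μ := volume.restrict (Set.Ioc (0:ℝ) 1) with hμ
  haveI : IsFiniteMeasure μ := ⟨by
    rw [Measure.restrict_apply_univ, Real.volume_Ioc]; exact ENNReal.ofReal_lt_top⟩
  have hcont : Continuous fun t : ℝ => |t - θ| := (continuous_id.sub continuous_const).abs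
  have hf : MemLp (fun t : ℝ => |t - θ|) (ENNReal.ofReal p) μ := by
    apply MemLp.of_bound hcont.aestronglyMeasurable 1
    refine (ae_restrict_iff' measurableSet_Ioc).2 (Filter.Eventually.of_forall fun x hx => ?_)
    rw [Real.norm_eq_abs, abs_abs, abs_le]
    constructor <;> [linarith [hx.1]; linarith [hx.2]]
  have hg : MemLp (fun _ : ℝ => (1:ℝ)) (ENNReal.ofReal q) μ := memLp_const 1
  have hH := MeasureTheory.integral_mul_le_Lp_mul_Lq_of_nonneg hpq
    (Filter.Eventually.of_forall fun x => abs_nonneg _)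
    (Filter.Eventually.of_forall fun _ => zero_le_one) hf hg
  simp only [mul_one] at hH
  have hgq : (∫ _ : ℝ, (1:ℝ) ^ q ∂μ) = 1 := by
    simp [Real.one_rpow, hμ, Real.volume_Ioc]
  rw [hgq, Real.one_rpow, mul_one] at hH
  have e1 : (∫ t in (0:ℝ)..1, |t - θ|) = ∫ t : ℝ, |t - θ| ∂μ := by
    rw [intervalIntegral.integral_of_le zero_le_one]
  have e2 : (∫ t : ℝ, |t - θ| ^ p ∂μ) = (θ ^ (p+1) + (1-θ) ^ (p+1)) / (p+1) := by
    rw [← aux_rpow_int θ p hθ0 hθ1 hp, intervalIntegral.integral_of_le zero_le_one]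
  rw [e1, ← e2]
  exact hH

lemma aux_J (c d θ p q : ℝ) (n : ℕ) (hθ0 : 0 ≤ θ) (hθ1 : θ ≤ 1)
    (hpq : Real.HolderConjugate p q) :
    |∫ t in (0:ℝ)..1, (t - θ) * ((n:ℝ) * (t * c + (1 - t) * d) ^ (n - 1))|
      ≤ (n:ℝ) * (max |c| |d|) ^ (n - 1) * ((θ ^ (p+1) + (1-θ) ^ (p+1)) / (p+1)) ^ (1/p) := by
  set M := max |c| |d| with hM
  have hM0 : 0 ≤ M := le_trans (abs_nonneg c) (le_max_left _ _)
  have step1 := intervalIntegral.abs_integral_le_integral_abs (μ := volume)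
    (f := fun t : ℝ => (t - θ) * ((n:ℝ) * (t * c + (1 - t) * d) ^ (n - 1))) zero_le_one
  have hcont : Continuous fun t : ℝ => (t - θ) * ((n:ℝ) * (t * c + (1 - t) * d) ^ (n - 1)) := by
    fun_prop
  have step2 : (∫ t in (0:ℝ)..1, |(t - θ) * ((n:ℝ) * (t * c + (1 - t) * d) ^ (n - 1))|)
      ≤ ∫ t in (0:ℝ)..1, |t - θ| * ((n:ℝ) * M ^ (n - 1)) := by
    apply intervalIntegral.integral_mono_on zero_le_one
      (hcont.abs.intervalIntegrable 0 1)
      (((continuous_id.sub continuous_const).abs.mul continuous_const).intervalIntegrable 0 1)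
    intro t ht
    have ht0 : 0 ≤ t := ht.1
    have ht1 : t ≤ 1 := ht.2
    have hX : |t * c + (1 - t) * d| ≤ M := by
      have h1 := abs_add_le (t * c) ((1 - t) * d)
      rw [abs_mul, abs_mul, abs_of_nonneg ht0, abs_of_nonneg (by linarith : (0:ℝ) ≤ 1 - t)] at h1
      have h2 : |c| ≤ M := le_max_left _ _
      have h3 : |d| ≤ M := le_max_right _ _
      nlinarith
    rw [abs_mul]
    apply mul_le_mul_of_nonneg_left _ (abs_nonneg _)
    rw [abs_mul, abs_pow, Nat.abs_cast]
    exact mul_le_mul_of_nonneg_left (pow_le_pow_left₀ (abs_nonneg _) hX _) (Nat.cast_nonneg n)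
  rw [intervalIntegral.integral_mul_const] at step2
  have step3 := aux_K θ p q hθ0 hθ1 hpq
  have hC : (0:ℝ) ≤ (n:ℝ) * M ^ (n - 1) := by positivity
  calc |∫ t in (0:ℝ)..1, (t - θ) * ((n:ℝ) * (t * c + (1 - t) * d) ^ (n - 1))|
      ≤ (∫ t in (0:ℝ)..1, |t - θ|) * ((n:ℝ) * M ^ (n - 1)) := step1.trans step2
    _ ≤ ((θ ^ (p+1) + (1-θ) ^ (p+1)) / (p+1)) ^ (1/p) * ((n:ℝ) * M ^ (n - 1)) :=
        mul_le_mul_of_nonneg_right step3 hC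
    _ = (n:ℝ) * M ^ (n - 1) * ((θ ^ (p+1) + (1-θ) ^ (p+1)) / (p+1)) ^ (1/p) := by ring

lemma aux_max (A B q : ℝ) (n : ℕ) (hn : 2 ≤ n) (hA : 0 ≤ A) (hB : 0 ≤ B) (hq : 0 < q) :
    (max (A ^ (((n:ℝ) - 1) * q)) (B ^ (((n:ℝ) - 1) * q))) ^ (1/q) = (max A B) ^ (n - 1) := by
  have hn2 : (2:ℝ) ≤ (n:ℝ) := by exact_mod_cast hn
  have hr : 0 ≤ ((n:ℝ) - 1) * q := mul_nonneg (by linarith) hq.le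
  have hmaxAB : 0 ≤ max A B := le_trans hA (le_max_left _ _)
  have hmax : max (A ^ (((n:ℝ) - 1) * q)) (B ^ (((n:ℝ) - 1) * q))
      = (max A B) ^ (((n:ℝ) - 1) * q) := by
    rcases le_total A B with h | h
    · rw [max_eq_right (Real.rpow_le_rpow hA h hr), max_eq_right h]
    · rw [max_eq_left (Real.rpow_le_rpow hB h hr), max_eq_left h]
  rw [hmax, ← Real.rpow_natCast (max A B) (n - 1), ← Real.rpow_mul hmaxAB]
  congr 1
  rw [Nat.cast_sub (by omega : 1 ≤ n)]
  field_simp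
  simp

theorem stmt_14 (a b θ lam p q : ℝ) (n : ℕ) (hab : a < b) (hn : 2 ≤ n)
    (hθ : θ ∈ Set.Icc (0:ℝ) 1) (hlam : lam ∈ Set.Icc (0:ℝ) 1)
    (hq : 1 < q) (hpq : 1 / p + 1 / q = 1) :
    |(1 - θ) * (lam * a ^ n + (1 - lam) * b ^ n) + θ * ((1 - lam) * a + lam * b) ^ n
        - (b ^ (n + 1) - a ^ (n + 1)) / ((n + 1) * (b - a))|
      ≤ (b - a) * ((θ ^ (p + 1) + (1 - θ) ^ (p + 1)) / (p + 1)) ^ (1 / p) * n *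
          (lam ^ 2 * (max (|a| ^ (((n : ℝ) - 1) * q)) (|(1 - lam) * a + lam * b| ^ (((n : ℝ) - 1) * q))) ^ (1 / q)
            + (1 - lam) ^ 2 * (max (|b| ^ (((n : ℝ) - 1) * q)) (|(1 - lam) * a + lam * b| ^ (((n : ℝ) - 1) * q))) ^ (1 / q)) := by
  obtain ⟨hθ0, hθ1⟩ := hθ
  obtain ⟨hl0, hl1⟩ := hlam
  have hq0 : (0:ℝ) < q := by linarith
  have hqinv0 : 0 < 1 / q := by positivity
  have hqinv1 : 1 / q < 1 := by rw [div_lt_one hq0]; linarith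
  have hpinv0 : 0 < 1 / p := by linarith
  have hp0 : 0 < p := by
    rcases lt_trichotomy p 0 with h | h | h
    · exfalso; have : 1 / p < 0 := by exact div_neg_of_pos_of_neg one_pos h
      linarith
    · exfalso; rw [h] at hpinv0; simp at hpinv0
    · exact h
  have hp1 : 1 < p := by
    have : 1 / p < 1 := by linarith
    rwa [div_lt_one hp0] at this
  have hconj : Real.HolderConjugate p q := Real.holderConjugate_iff.mpr ⟨hp1, by
    rw [← one_div, ← one_div]; exact hpq⟩
  have hba : b - a ≠ 0 := sub_ne_zero.mpr hab.ne'
  have hn1 : ((n:ℝ) + 1) ≠ 0 := by positivity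
  set x : ℝ := (1 - lam) * a + lam * b with hx
  set Ia : ℝ := ∫ t in (0:ℝ)..1, (t * a + (1 - t) * x) ^ n with hIa
  set Ib : ℝ := ∫ t in (0:ℝ)..1, (t * b + (1 - t) * x) ^ n with hIb
  set Ja : ℝ := ∫ t in (0:ℝ)..1, (t - θ) * ((n:ℝ) * (t * a + (1 - t) * x) ^ (n - 1)) with hJa
  set Jb : ℝ := ∫ t in (0:ℝ)..1, (t - θ) * ((n:ℝ) * (t * b + (1 - t) * x) ^ (n - 1)) with hJb
  have hA := aux_ftc a x θ n
  have hB := aux_ftc b x θ n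
  have hMa := aux_mean a x n
  have hMb := aux_mean b x n
  rw [← hIa] at hA hMa
  rw [← hJa] at hA
  rw [← hIb] at hB hMb
  rw [← hJb] at hB
  have hIab : lam * Ia + (1 - lam) * Ib = (b ^ (n + 1) - a ^ (n + 1)) / (((n:ℝ) + 1) * (b - a)) := by
    rw [eq_div_iff (mul_ne_zero hn1 hba)]
    linear_combination hMb - hMa
  have key : (1 - θ) * (lam * a ^ n + (1 - lam) * b ^ n) + θ * x ^ n
      - (b ^ (n + 1) - a ^ (n + 1)) / (((n:ℝ) + 1) * (b - a))
      = (b - a) * (-(lam ^ 2 * Ja) + (1 - lam) ^ 2 * Jb) := by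
    rw [← hIab]
    linear_combination lam * hA + (1 - lam) * hB
  have hbJa := aux_J a x θ p q n hθ0 hθ1 hconj
  have hbJb := aux_J b x θ p q n hθ0 hθ1 hconj
  rw [← hJa] at hbJa
  rw [← hJb] at hbJb
  have hmax1 := aux_max |a| |x| q n hn (abs_nonneg a) (abs_nonneg x) hq0
  have hmax2 := aux_max |b| |x| q n hn (abs_nonneg b) (abs_nonneg x) hq0
  rw [hmax1, hmax2]
  have hCθ : 0 ≤ ((θ ^ (p + 1) + (1 - θ) ^ (p + 1)) / (p + 1)) ^ (1 / p) := by
    apply Real.rpow_nonneg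
    have h1 : 0 ≤ θ ^ (p + 1) := Real.rpow_nonneg hθ0 _
    have h2 : 0 ≤ (1 - θ) ^ (p + 1) := Real.rpow_nonneg (by linarith) _
    positivity
  rw [key, abs_mul, abs_of_pos (sub_pos.mpr hab)]
  have htri : |-(lam ^ 2 * Ja) + (1 - lam) ^ 2 * Jb| ≤ lam ^ 2 * |Ja| + (1 - lam) ^ 2 * |Jb| := by
    calc |-(lam ^ 2 * Ja) + (1 - lam) ^ 2 * Jb| ≤ |-(lam ^ 2 * Ja)| + |(1 - lam) ^ 2 * Jb| :=
          abs_add_le _ _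
      _ = lam ^ 2 * |Ja| + (1 - lam) ^ 2 * |Jb| := by
          rw [abs_neg, abs_mul, abs_mul, abs_of_nonneg (sq_nonneg lam),
            abs_of_nonneg (sq_nonneg (1 - lam))]
  calc (b - a) * |-(lam ^ 2 * Ja) + (1 - lam) ^ 2 * Jb|
      ≤ (b - a) * (lam ^ 2 * |Ja| + (1 - lam) ^ 2 * |Jb|) := by
        apply mul_le_mul_of_nonneg_left htri (by linarith)
    _ ≤ (b - a) * (lam ^ 2 * ((n:ℝ) * (max |a| |x|) ^ (n - 1) * ((θ ^ (p+1) + (1-θ) ^ (p+1)) / (p+1)) ^ (1/p))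
          + (1 - lam) ^ 2 * ((n:ℝ) * (max |b| |x|) ^ (n - 1) * ((θ ^ (p+1) + (1-θ) ^ (p+1)) / (p+1)) ^ (1/p))) := by
        gcongr
    _ = (b - a) * ((θ ^ (p + 1) + (1 - θ) ^ (p + 1)) / (p + 1)) ^ (1 / p) * n *
          (lam ^ 2 * (max |a| |x|) ^ (n - 1) + (1 - lam) ^ 2 * (max |b| |x|) ^ (n - 1)) := by
        ring
end

section
/- Let 0 < a < b, θ, λ ∈ [0,1], and q ≥ 1. Then |(1−θ)(λ/a + (1−λ)/b) + θ/((1−λ)a + λb) − (ln b − ln a)/(b−a)| ≤ (b−a)(θ² − θ + 1/2) [ λ² (max{a^(−2q), ((1−λ)a + λb)^(−2q)})^(1/q) + (1−λ)² (max{b^(−2q), ((1−λ)a + λb)^(−2q)})^(1/q) ]. -/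
open Real Set

lemma stmt15_poly_int (s t m C : ℝ) :
    ∫ x in s..t, (x - m) / C = ((t - m)^2 - (s - m)^2) / (2*C) := by
  have h : ∫ x in s..t, (x - m) = (t^2 - s^2)/2 - m*(t - s) := by
    rw [intervalIntegral.integral_sub (Continuous.intervalIntegrable (by continuity) _ _)
      (Continuous.intervalIntegrable (by continuity) _ _),
      integral_id, intervalIntegral.integral_const, smul_eq_mul]
    ring
  rw [intervalIntegral.integral_div, h]
  ring

lemma stmt15_intg (s t m : ℝ) (hs : 0 < s) (hst : s ≤ t) :
    IntervalIntegrable (fun x => (x - m)/x^2) MeasureTheory.volume s t := by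
  apply ContinuousOn.intervalIntegrable
  apply ContinuousOn.div (by fun_prop) (by fun_prop)
  intro x hx
  rw [uIcc_of_le hst] at hx
  exact pow_ne_zero 2 (lt_of_lt_of_le hs hx.1).ne'

lemma stmt15_int_main (s t m : ℝ) (hs : 0 < s) (hst : s ≤ t) :
    ∫ x in s..t, (x - m)/x^2 = (Real.log t + m * t⁻¹) - (Real.log s + m * s⁻¹) := by
  have hsub : Set.uIcc s t ⊆ {x : ℝ | x ≠ 0} := by
    rw [uIcc_of_le hst]; intro x hx; exact (lt_of_lt_of_le hs hx.1).ne'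
  apply intervalIntegral.integral_eq_sub_of_hasDerivAt
  · intro x hx
    have hx0 : x ≠ 0 := hsub hx
    have h1 := Real.hasDerivAt_log hx0
    have h2 : HasDerivAt (fun y : ℝ => m * y⁻¹) (m * (-(x^2)⁻¹)) x :=
      (hasDerivAt_inv hx0).const_mul m
    have := h1.add h2
    convert this using 1
    · rfl
    field_simp
    ring
  · exact stmt15_intg s t m hs hst

lemma stmt15_key (u v m : ℝ) (hu : 0 < u) (hm1 : u ≤ m) (hm2 : m ≤ v) :
    |(Real.log v - Real.log u) - m * (1/u - 1/v)| ≤ ((m - u)^2 + (v - m)^2) / (2*u^2) := by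
  have hm : 0 < m := lt_of_lt_of_le hu hm1
  have hv : 0 < v := lt_of_lt_of_le hm hm2
  set I1 := ∫ x in u..m, (x - m)/x^2 with hI1
  set I2 := ∫ x in m..v, (x - m)/x^2 with hI2
  have e1 := stmt15_int_main u m m hu hm1
  have e2 := stmt15_int_main m v m hm hm2
  have hsum : I1 + I2 = (Real.log v - Real.log u) - m * (1/u - 1/v) := by
    rw [hI1, hI2, e1, e2]
    field_simp
    ring
  have hA : (0:ℝ) ≤ (m - u)^2 / (2*u^2) := by positivity
  have hB : (0:ℝ) ≤ (v - m)^2 / (2*u^2) := by positivity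
  have hI1le : I1 ≤ 0 := by
    have : I1 ≤ ∫ _x in u..m, (0:ℝ) := by
      rw [hI1]
      apply intervalIntegral.integral_mono_on hm1 (stmt15_intg u m m hu hm1)
        (Continuous.intervalIntegrable (by continuity) _ _)
      intro x hx
      have hx0 : 0 < x := lt_of_lt_of_le hu hx.1
      exact div_nonpos_of_nonpos_of_nonneg (by linarith [hx.2]) (by positivity)
    simpa using this
  have hI1ge : -((m - u)^2 / (2*u^2)) ≤ I1 := by
    have comp : ∫ x in u..m, (x - m)/u^2 ≤ I1 := by
      rw [hI1]
      apply intervalIntegral.integral_mono_on hm1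
        (Continuous.intervalIntegrable (by continuity) _ _) (stmt15_intg u m m hu hm1)
      intro x hx
      have hx0 : 0 < x := lt_of_lt_of_le hu hx.1
      rw [div_le_div_iff₀ (by positivity) (by positivity)]
      have h1 : (m - x) * (x^2 - u^2) ≥ 0 :=
        mul_nonneg (by linarith [hx.2]) (by nlinarith [hx.1])
      nlinarith [h1]
    rw [stmt15_poly_int] at comp
    have : ((m-m)^2 - (u-m)^2) / (2*u^2) = -((m-u)^2/(2*u^2)) := by ring
    linarith [comp, this.symm.le, this.le]
  have hI2ge : 0 ≤ I2 := by
    rw [hI2]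
    apply intervalIntegral.integral_nonneg hm2
    intro x hx
    have hx0 : 0 < x := lt_of_lt_of_le hm hx.1
    apply div_nonneg (by linarith [hx.1]) (by positivity)
  have hI2le : I2 ≤ (v - m)^2 / (2*u^2) := by
    have comp : I2 ≤ ∫ x in m..v, (x - m)/u^2 := by
      rw [hI2]
      apply intervalIntegral.integral_mono_on hm2 (stmt15_intg m v m hm hm2)
        (Continuous.intervalIntegrable (by continuity) _ _)
      intro x hx
      have hx0 : 0 < x := lt_of_lt_of_le hm hx.1
      rw [div_le_div_iff₀ (by positivity) (by positivity)]
      have h1 : (x - m) * (x^2 - u^2) ≥ 0 :=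
        mul_nonneg (by linarith [hx.1]) (by nlinarith [hx.1, hm1])
      nlinarith [h1]
    rw [stmt15_poly_int] at comp
    have : ((v-m)^2 - (m-m)^2) / (2*u^2) = (v-m)^2/(2*u^2) := by ring
    linarith [comp, this.le]
  rw [← hsum, abs_le]
  constructor
  · have h : -(((m - u)^2 + (v - m)^2) / (2*u^2)) = -((m - u)^2/(2*u^2)) + -((v-m)^2/(2*u^2)) := by
      ring
    rw [h]; linarith
  · have h : ((m - u)^2 + (v - m)^2) / (2*u^2) = (m - u)^2/(2*u^2) + (v-m)^2/(2*u^2) := by ring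
    rw [h]; linarith

lemma stmt15_Ebound (u v θ : ℝ) (hu : 0 < u) (huv : u < v) (hθ0 : 0 ≤ θ) (hθ1 : θ ≤ 1) :
    |(1-θ)/u + θ/v - (Real.log v - Real.log u)/(v-u)| ≤ (v-u) * (θ^2 - θ + 1/2) / u^2 := by
  have hv : 0 < v := lt_trans hu huv
  have hvu : 0 < v - u := by linarith
  have hm1 : u ≤ (1-θ)*v + θ*u := by nlinarith
  have hm2 : (1-θ)*v + θ*u ≤ v := by nlinarith
  have hk := stmt15_key u v ((1-θ)*v + θ*u) hu hm1 hm2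
  have hE : (1-θ)/u + θ/v - (Real.log v - Real.log u)/(v-u)
      = -((Real.log v - Real.log u - ((1-θ)*v + θ*u) * (1/u - 1/v))/(v-u)) := by
    field_simp
    ring
  rw [hE, abs_neg, abs_div, abs_of_pos hvu, div_le_iff₀ hvu]
  refine hk.trans (le_of_eq ?_)
  field_simp
  ring

theorem stmt_15 (a b θ lam q : ℝ) (ha : 0 < a) (hab : a < b)
    (hθ : θ ∈ Set.Icc (0:ℝ) 1) (hlam : lam ∈ Set.Icc (0:ℝ) 1) (hq : 1 ≤ q) :
    |(1 - θ) * (lam / a + (1 - lam) / b) + θ / ((1 - lam) * a + lam * b)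
        - (Real.log b - Real.log a) / (b - a)|
      ≤ (b - a) * (θ ^ 2 - θ + 1 / 2) *
          (lam ^ 2 * (max (a ^ (-(2 * q))) (((1 - lam) * a + lam * b) ^ (-(2 * q)))) ^ (1 / q)
            + (1 - lam) ^ 2 * (max (b ^ (-(2 * q))) (((1 - lam) * a + lam * b) ^ (-(2 * q)))) ^ (1 / q)) := by
  obtain ⟨hθ0, hθ1⟩ := hθ
  obtain ⟨hl0, hl1⟩ := hlam
  have hb : 0 < b := lt_trans ha hab
  have hq0 : 0 < q := lt_of_lt_of_le one_pos hq
  set c := (1 - lam) * a + lam * b with hcdef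
  have hac : a ≤ c := by rw [hcdef]; nlinarith
  have hcb : c ≤ b := by rw [hcdef]; nlinarith
  have hc : 0 < c := lt_of_lt_of_le ha hac
  -- simplify the rpow expressions
  have hpow : ∀ x : ℝ, 0 < x → x ^ ((-(2*q)) * (1/q)) = 1/x^2 := by
    intro x hx
    have h2 : (-(2*q)) * (1/q) = -2 := by field_simp
    rw [h2, Real.rpow_neg hx.le, one_div]
    congr 1
    rw [show (2:ℝ) = ((2:ℕ):ℝ) by norm_num, Real.rpow_natCast]
  have hmax1 : (max (a ^ (-(2*q))) (c ^ (-(2*q)))) ^ (1/q) = 1/a^2 := by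
    have h1 : c ^ (-(2*q)) ≤ a ^ (-(2*q)) := by
      rw [Real.rpow_neg hc.le, Real.rpow_neg ha.le]
      exact inv_anti₀ (Real.rpow_pos_of_pos ha _)
        (Real.rpow_le_rpow ha.le hac (by positivity))
    rw [max_eq_left h1, ← Real.rpow_mul ha.le]
    exact hpow a ha
  have hmax2 : (max (b ^ (-(2*q))) (c ^ (-(2*q)))) ^ (1/q) = 1/c^2 := by
    have h1 : b ^ (-(2*q)) ≤ c ^ (-(2*q)) := by
      rw [Real.rpow_neg hc.le, Real.rpow_neg hb.le]
      exact inv_anti₀ (Real.rpow_pos_of_pos hc _)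
        (Real.rpow_le_rpow hc.le hcb (by positivity))
    rw [max_eq_right h1, ← Real.rpow_mul hc.le]
    exact hpow c hc
  rw [hmax1, hmax2]
  -- main inequality
  rcases eq_or_lt_of_le hl0 with h0 | h0
  · -- lam = 0, c = a
    have hl : lam = 0 := h0.symm
    subst hl
    have hca : c = a := by rw [hcdef]; ring
    have hE := stmt15_Ebound a b (1-θ) ha hab (by linarith) (by linarith)
    have heq : (1 - θ) * (0 / a + (1 - 0) / b) + θ / c - (Real.log b - Real.log a) / (b - a)
        = (1-(1-θ))/a + (1-θ)/b - (Real.log b - Real.log a)/(b-a) := by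
      rw [hca]; ring
    rw [heq]
    refine hE.trans (le_of_eq ?_)
    rw [hca]; ring
  rcases eq_or_lt_of_le hl1 with h1 | h1
  · -- lam = 1, c = b
    subst h1
    have hcb' : c = b := by rw [hcdef]; ring
    have hE := stmt15_Ebound a b θ ha hab hθ0 hθ1
    have heq : (1 - θ) * (1 / a + (1 - 1) / b) + θ / c - (Real.log b - Real.log a) / (b - a)
        = (1-θ)/a + θ/b - (Real.log b - Real.log a)/(b-a) := by
      rw [hcb']; ring
    rw [heq]
    refine hE.trans (le_of_eq ?_)
    rw [hcb']; ring
  · -- 0 < lam < 1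
    have hac' : a < c := by rw [hcdef]; nlinarith
    have hcb'' : c < b := by rw [hcdef]; nlinarith
    have hT1 := stmt15_Ebound a c θ ha hac' hθ0 hθ1
    have hT2 := stmt15_Ebound c b (1-θ) hc hcb'' (by linarith) (by linarith)
    have hid : (1 - θ) * (lam / a + (1 - lam) / b) + θ / c - (Real.log b - Real.log a) / (b - a)
        = lam * ((1-θ)/a + θ/c - (Real.log c - Real.log a)/(c-a))
          + (1-lam) * ((1-(1-θ))/c + (1-θ)/b - (Real.log b - Real.log c)/(b-c)) := by
      have hca : c - a = lam * (b - a) := by rw [hcdef]; ring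
      have hbc : b - c = (1-lam) * (b - a) := by rw [hcdef]; ring
      have hl0' : lam ≠ 0 := h0.ne'
      have hl1' : (1:ℝ) - lam ≠ 0 := by linarith
      have e1 : lam * ((Real.log c - Real.log a)/(lam*(b-a)))
          = (Real.log c - Real.log a)/(b-a) := by
        rw [mul_div_assoc', mul_div_mul_left _ _ hl0']
      have e2 : (1-lam) * ((Real.log b - Real.log c)/((1-lam)*(b-a)))
          = (Real.log b - Real.log c)/(b-a) := by
        rw [mul_div_assoc', mul_div_mul_left _ _ hl1']
      rw [hca, hbc]
      have expand : lam * ((1-θ)/a + θ/c - (Real.log c - Real.log a)/(lam*(b-a)))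
          + (1-lam) * ((1-(1-θ))/c + (1-θ)/b - (Real.log b - Real.log c)/((1-lam)*(b-a)))
          = lam * ((1-θ)/a + θ/c) + (1-lam) * ((1-(1-θ))/c + (1-θ)/b)
            - (lam * ((Real.log c - Real.log a)/(lam*(b-a)))
              + (1-lam) * ((Real.log b - Real.log c)/((1-lam)*(b-a)))) := by ring
      rw [expand, e1, e2]
      ring
    rw [hid]
    calc |lam * ((1-θ)/a + θ/c - (Real.log c - Real.log a)/(c-a))
          + (1-lam) * ((1-(1-θ))/c + (1-θ)/b - (Real.log b - Real.log c)/(b-c))|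
        ≤ lam * |(1-θ)/a + θ/c - (Real.log c - Real.log a)/(c-a)|
          + (1-lam) * |(1-(1-θ))/c + (1-θ)/b - (Real.log b - Real.log c)/(b-c)| := by
          refine (abs_add_le _ _).trans ?_
          have hll : |lam| = lam := abs_of_nonneg hl0
          have hll2 : |1 - lam| = 1 - lam := abs_of_nonneg (by linarith)
          rw [abs_mul, abs_mul, hll, hll2]
      _ ≤ lam * ((c-a) * (θ^2 - θ + 1/2) / a^2)
          + (1-lam) * ((b-c) * ((1-θ)^2 - (1-θ) + 1/2) / c^2) := by
          exact add_le_add (mul_le_mul_of_nonneg_left hT1 hl0)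
            (mul_le_mul_of_nonneg_left hT2 (by linarith))
      _ = (b - a) * (θ ^ 2 - θ + 1 / 2) * (lam ^ 2 * (1/a^2) + (1 - lam) ^ 2 * (1/c^2)) := by
          have hca : c - a = lam * (b - a) := by rw [hcdef]; ring
          have hbc : b - c = (1-lam) * (b - a) := by rw [hcdef]; ring
          rw [hca, hbc]
          ring
end

section
/- Let 0 < a < b, θ, λ ∈ [0,1], and q > 1 with 1/p + 1/q = 1. Then |(1−θ)(λ/a + (1−λ)/b) + θ/((1−λ)a + λb) − (ln b − ln a)/(b−a)| ≤ (b−a) ((θ^(p+1) + (1−θ)^(p+1))/(p+1))^(1/p) [ λ² (max{a^(−2q), ((1−λ)a + λb)^(−2q)})^(1/q) + (1−λ)² (max{b^(−2q), ((1−λ)a + λb)^(−2q)})^(1/q) ]. -/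
open intervalIntegral in
theorem intabs_aux (θ : ℝ) (h0 : 0 ≤ θ) (h1 : θ ≤ 1) :
    ∫ t in (0:ℝ)..1, |θ - t| = (θ^2 + (1-θ)^2)/2 := by
  have hsplit : ∫ t in (0:ℝ)..1, |θ - t| =
      (∫ t in (0:ℝ)..θ, |θ - t|) + ∫ t in θ..1, |θ - t| := by
    rw [integral_add_adjacent_intervals] <;>
      exact (continuous_const.sub continuous_id).abs.intervalIntegrable _ _
  have h1' : ∫ t in (0:ℝ)..θ, |θ - t| = θ^2/2 := by
    rw [integral_congr (g := fun t => θ - t)]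
    · rw [integral_sub intervalIntegrable_const (intervalIntegrable_id), integral_const, integral_id]
      simp [smul_eq_mul]; ring
    · intro t ht
      rw [Set.uIcc_of_le h0] at ht
      exact abs_of_nonneg (by linarith [ht.2])
  have h2' : ∫ t in θ..1, |θ - t| = (1-θ)^2/2 := by
    rw [integral_congr (g := fun t => t - θ)]
    · rw [integral_sub intervalIntegrable_id intervalIntegrable_const, integral_const, integral_id]
      simp [smul_eq_mul]; ring
    · intro t ht
      rw [Set.uIcc_of_le h1] at ht
      simp only
      rw [abs_sub_comm]
      exact abs_of_nonneg (by linarith [ht.1])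
  rw [hsplit, h1', h2']; ring

open intervalIntegral in
theorem intabspow_aux (θ p : ℝ) (h0 : 0 ≤ θ) (h1 : θ ≤ 1) (hp : 0 < p) :
    ∫ t in (0:ℝ)..1, |θ - t| ^ p = (θ^(p+1) + (1-θ)^(p+1))/(p+1) := by
  have hcont : Continuous fun x : ℝ => x ^ p :=
    continuous_iff_continuousAt.mpr fun x => Real.continuousAt_rpow_const x p (Or.inr hp.le)
  have hsplit : ∫ t in (0:ℝ)..1, |θ - t| ^ p =
      (∫ t in (0:ℝ)..θ, |θ - t| ^ p) + ∫ t in θ..1, |θ - t| ^ p := by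
    rw [integral_add_adjacent_intervals] <;>
      exact (hcont.comp (continuous_const.sub continuous_id).abs).intervalIntegrable _ _
  have hrpow : ∀ c : ℝ, ∫ x in (0:ℝ)..c, x ^ p = c ^ (p+1) / (p+1) := by
    intro c
    rw [integral_rpow (Or.inl (by linarith))]
    simp [Real.zero_rpow (by positivity : p + 1 ≠ 0)]
  have h1' : ∫ t in (0:ℝ)..θ, |θ - t| ^ p = θ^(p+1)/(p+1) := by
    have : ∫ t in (0:ℝ)..θ, |θ - t| ^ p = ∫ t in (0:ℝ)..θ, (θ - t) ^ p := by
      apply integral_congr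
      intro t ht
      rw [Set.uIcc_of_le h0] at ht
      simp only []
      rw [abs_of_nonneg (by linarith [ht.2])]
    rw [this, integral_comp_sub_left (fun x => x ^ p) θ]
    simpa using hrpow θ
  have h2' : ∫ t in θ..1, |θ - t| ^ p = (1-θ)^(p+1)/(p+1) := by
    have : ∫ t in θ..1, |θ - t| ^ p = ∫ t in θ..1, (t - θ) ^ p := by
      apply integral_congr
      intro t ht
      rw [Set.uIcc_of_le h1] at ht
      simp only []
      rw [abs_sub_comm, abs_of_nonneg (by linarith [ht.1])]
    rw [this, integral_comp_sub_right (fun x => x ^ p) θ]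
    simpa using hrpow (1 - θ)
  rw [hsplit, h1', h2']; ring

open MeasureTheory in
theorem lemB_aux (θ p : ℝ) (h0 : 0 ≤ θ) (h1 : θ ≤ 1) (hp : 1 < p) :
    (θ^2 + (1-θ)^2)/2 ≤ ((θ^(p+1) + (1-θ)^(p+1))/(p+1)) ^ (1/p) := by
  have hA := intabs_aux θ h0 h1
  have hD := intabspow_aux θ p h0 h1 (by linarith)
  have hcont : Continuous fun x : ℝ => x ^ p :=
    continuous_iff_continuousAt.mpr fun x => Real.continuousAt_rpow_const x p (Or.inr (by linarith))
  have hf : Continuous fun t : ℝ => |θ - t| := (continuous_const.sub continuous_id).abs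
  set μ : Measure ℝ := volume.restrict (Set.Icc (0:ℝ) 1) with hμ
  have : IsProbabilityMeasure μ := ⟨by simp [hμ, Real.volume_Icc]⟩
  have hiconv : (∫ t, |θ - t| ∂μ) ^ p ≤ ∫ t, |θ - t| ^ p ∂μ := by
    have := (convexOn_rpow hp.le).map_integral_le (μ := μ)
      (f := fun t => |θ - t|)
      (hcont.continuousOn) isClosed_Ici
      (Filter.Eventually.of_forall fun t => Set.mem_Ici.mpr (abs_nonneg _))
      (hf.integrableOn_Icc) ((hcont.comp hf).integrableOn_Icc)
    simpa using this
  have hIcc : ∀ g : ℝ → ℝ, (∫ t, g t ∂μ) = ∫ t in (0:ℝ)..1, g t := by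
    intro g
    rw [intervalIntegral.integral_of_le zero_le_one, hμ,
      MeasureTheory.integral_Icc_eq_integral_Ioc]
  rw [hIcc, hIcc, hA, hD] at hiconv
  have hAnn : (0:ℝ) ≤ (θ^2 + (1-θ)^2)/2 := by positivity
  calc (θ^2 + (1-θ)^2)/2 = (((θ^2 + (1-θ)^2)/2) ^ p) ^ (1/p) := by
        rw [← Real.rpow_mul hAnn, mul_one_div_cancel (by positivity : p ≠ 0), Real.rpow_one]
    _ ≤ ((θ^(p+1) + (1-θ)^(p+1))/(p+1)) ^ (1/p) :=
        Real.rpow_le_rpow (by positivity) hiconv (by positivity)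

open intervalIntegral MeasureTheory in
theorem lemA_aux (u v θ : ℝ) (hu : 0 < u) (huv : u < v) (h0 : 0 ≤ θ) (h1 : θ ≤ 1) :
    |θ/u + (1-θ)/v - (Real.log v - Real.log u)/(v-u)| ≤
      (v-u)/u^2 * ((θ^2+(1-θ)^2)/2) := by
  set w := v - u with hwdef
  have hw : 0 < w := by simp [hwdef]; linarith
  have hpos : ∀ t ∈ Set.uIcc (0:ℝ) 1, 0 < u + t*w := by
    intro t ht
    rw [Set.uIcc_of_le zero_le_one] at ht
    nlinarith [ht.1]
  have hderiv : ∀ t ∈ Set.uIcc (0:ℝ) 1,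
      HasDerivAt (fun t => -((θ - t)/(u + t*w) + Real.log (u + t*w)/w))
        ((θ - t)*w/(u + t*w)^2) t := by
    intro t ht
    have hne : u + t*w ≠ 0 := (hpos t ht).ne'
    have hl : HasDerivAt (fun t : ℝ => u + t*w) w t := by
      simpa using ((hasDerivAt_id t).mul_const w).const_add u
    have hd1 : HasDerivAt (fun t => (θ - t)/(u + t*w))
        (((-1)*(u + t*w) - (θ - t)*w)/(u + t*w)^2) t := by
      simpa [Pi.sub_def, Pi.div_def] using ((hasDerivAt_const t θ).sub (hasDerivAt_id t)).div hl hne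
    have hd2 : HasDerivAt (fun t => Real.log (u + t*w)/w) ((w/(u + t*w))/w) t :=
      (hl.log hne).div_const w
    have : HasDerivAt (fun t => -((θ - t)/(u + t*w) + Real.log (u + t*w)/w))
        (-((((-1)*(u + t*w) - (θ - t)*w)/(u + t*w)^2) + (w/(u + t*w))/w)) t := (hd1.add hd2).neg
    convert this using 1
    field_simp
    ring
  have hcont : ContinuousOn (fun t => (θ - t)*w/(u + t*w)^2) (Set.uIcc (0:ℝ) 1) := by
    apply ContinuousOn.div
    · exact ((continuous_const.sub continuous_id).mul continuous_const).continuousOn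
    · exact ((continuous_const.add (continuous_id.mul continuous_const)).pow 2).continuousOn
    · intro t ht
      exact pow_ne_zero 2 (hpos t ht).ne'
  have hint : IntervalIntegrable (fun t => (θ - t)*w/(u + t*w)^2) MeasureTheory.volume 0 1 :=
    hcont.intervalIntegrable
  have key : ∫ t in (0:ℝ)..1, (θ - t)*w/(u + t*w)^2
      = θ/u + (1-θ)/v - (Real.log v - Real.log u)/w := by
    rw [integral_eq_sub_of_hasDerivAt hderiv hint]
    have hv : u + 1*w = v := by simp [hwdef]
    have hu0 : u + 0*w = u := by ring
    rw [hv, hu0]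
    have hvne : v ≠ 0 := by intro h; rw [h] at huv; linarith
    have hune : u ≠ 0 := hu.ne'
    field_simp
    ring
  rw [← key]
  calc |∫ t in (0:ℝ)..1, (θ - t)*w/(u + t*w)^2|
      ≤ ∫ t in (0:ℝ)..1, |(θ - t)*w/(u + t*w)^2| :=
        abs_integral_le_integral_abs zero_le_one
    _ ≤ ∫ t in (0:ℝ)..1, |θ - t| * (w/u^2) := by
        apply integral_mono_on zero_le_one (hint.abs)
        · exact (((continuous_const.sub continuous_id).abs).mul continuous_const).intervalIntegrable _ _
        · intro t ht
          have htpos := hpos t (by rw [Set.uIcc_of_le zero_le_one]; exact ht)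
          rw [abs_div, abs_mul, abs_of_pos hw, abs_of_pos (by positivity : (0:ℝ) < (u + t*w)^2)]
          rw [div_le_iff₀ (by positivity), mul_assoc]
          apply mul_le_mul_of_nonneg_left _ (abs_nonneg _)
          rw [div_mul_eq_mul_div, le_div_iff₀ (by positivity)]
          have : u^2 ≤ (u + t*w)^2 := by nlinarith [mul_nonneg ht.1 hw.le, hu.le]
          nlinarith
    _ = (v-u)/u^2 * ((θ^2+(1-θ)^2)/2) := by
        rw [intervalIntegral.integral_mul_const, intabs_aux θ h0 h1]
        ring

theorem rpow_helper_aux (x q : ℝ) (hx : 0 < x) (hq : 0 < q) :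
    (x ^ (-(2*q))) ^ (1/q : ℝ) = (x^2)⁻¹ := by
  rw [← Real.rpow_mul hx.le]
  have h : -(2*q) * (1/q) = -2 := by field_simp
  rw [h, Real.rpow_neg hx.le]
  norm_num

theorem rpow_mono_aux (x y q : ℝ) (hx : 0 < x) (hxy : x ≤ y) (hq : 0 < q) :
    y ^ (-(2*q)) ≤ x ^ (-(2*q)) := by
  rw [Real.rpow_neg hx.le, Real.rpow_neg (hx.trans_le hxy).le]
  exact inv_anti₀ (Real.rpow_pos_of_pos hx _)
    (Real.rpow_le_rpow hx.le hxy (by positivity))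

theorem stmt_16 (a b θ lam p q : ℝ) (ha : 0 < a) (hab : a < b)
    (hθ : θ ∈ Set.Icc (0:ℝ) 1) (hlam : lam ∈ Set.Icc (0:ℝ) 1)
    (hq : 1 < q) (hpq : 1 / p + 1 / q = 1) :
    |(1 - θ) * (lam / a + (1 - lam) / b) + θ / ((1 - lam) * a + lam * b)
        - (Real.log b - Real.log a) / (b - a)|
      ≤ (b - a) * ((θ ^ (p + 1) + (1 - θ) ^ (p + 1)) / (p + 1)) ^ (1 / p) *
          (lam ^ 2 * (max (a ^ (-(2 * q))) (((1 - lam) * a + lam * b) ^ (-(2 * q)))) ^ (1 / q)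
            + (1 - lam) ^ 2 * (max (b ^ (-(2 * q))) (((1 - lam) * a + lam * b) ^ (-(2 * q)))) ^ (1 / q)) := by
  obtain ⟨hθ0, hθ1⟩ := hθ
  obtain ⟨hl0, hl1⟩ := hlam
  have hq0 : (0:ℝ) < q := by linarith
  have hp0 : 0 < 1/p := by
    have : 1/q < 1 := by rw [div_lt_one hq0]; exact hq
    linarith
  have hppos : 0 < p := by
    by_contra h
    push_neg at h
    have : 1/p ≤ 0 := div_nonpos_of_nonneg_of_nonpos zero_le_one h
    linarith
  have hp1 : 1 < p := by
    have h1 : 1/p < 1 := by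
      have : 0 < 1/q := by positivity
      linarith
    rwa [div_lt_one hppos] at h1
  set c : ℝ := (1 - lam) * a + lam * b with hc
  have hac : a ≤ c := by nlinarith
  have hcb : c ≤ b := by nlinarith
  have hc0 : 0 < c := lt_of_lt_of_le ha hac
  set Cθ : ℝ := (θ^2 + (1-θ)^2)/2 with hCθ
  set Cp : ℝ := ((θ^(p+1) + (1-θ)^(p+1))/(p+1)) ^ (1/p) with hCp
  have hCθ0 : 0 ≤ Cθ := by positivity
  have hCθCp : Cθ ≤ Cp := lemB_aux θ p hθ0 hθ1 hp1
  -- max simplifications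
  have hmax1 : (max (a ^ (-(2*q))) (c ^ (-(2*q)))) ^ (1/q : ℝ) = (a^2)⁻¹ := by
    rw [max_eq_left (rpow_mono_aux a c q ha hac hq0), rpow_helper_aux a q ha hq0]
  have hmax2 : (max (b ^ (-(2*q))) (c ^ (-(2*q)))) ^ (1/q : ℝ) = (c^2)⁻¹ := by
    rw [max_eq_right (rpow_mono_aux c b q hc0 hcb hq0), rpow_helper_aux c q hc0 hq0]
  rw [hmax1, hmax2]
  -- key estimate
  have key : |(1 - θ) * (lam / a + (1 - lam) / b) + θ / c
        - (Real.log b - Real.log a) / (b - a)|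
      ≤ (b - a) * Cθ * (lam^2 * (a^2)⁻¹ + (1-lam)^2 * (c^2)⁻¹) := by
    by_cases h0 : lam = 0
    · subst h0
      have hA := lemA_aux a b θ ha hab hθ0 hθ1
      have hcc : c = a := by rw [hc]; ring
      rw [hcc]
      calc |(1 - θ) * (0 / a + (1 - 0) / b) + θ / a - (Real.log b - Real.log a) / (b - a)|
          = |θ/a + (1-θ)/b - (Real.log b - Real.log a)/(b-a)| := by ring_nf
        _ ≤ (b-a)/a^2 * Cθ := hA
        _ = (b - a) * Cθ * ((0:ℝ)^2 * (a^2)⁻¹ + (1-0)^2 * (a^2)⁻¹) := by ring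
    · by_cases h1 : lam = 1
      · subst h1
        have hA := lemA_aux a b (1-θ) ha hab (by linarith) (by linarith)
        have hcc : c = b := by rw [hc]; ring
        rw [hcc]
        calc |(1 - θ) * (1 / a + (1 - 1) / b) + θ / b - (Real.log b - Real.log a) / (b - a)|
            = |(1-θ)/a + (1-(1-θ))/b - (Real.log b - Real.log a)/(b-a)| := by ring_nf
          _ ≤ (b-a)/a^2 * (((1-θ)^2+(1-(1-θ))^2)/2) := hA
          _ = (b-a)/a^2 * Cθ := by rw [hCθ]; ring
          _ = (b - a) * Cθ * ((1:ℝ)^2 * (a^2)⁻¹ + (1-1)^2 * (b^2)⁻¹) := by ring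
      · have hl0' : 0 < lam := lt_of_le_of_ne hl0 (Ne.symm h0)
        have hl1' : lam < 1 := lt_of_le_of_ne hl1 h1
        have hacs : a < c := by rw [hc]; nlinarith
        have hcbs : c < b := by rw [hc]; nlinarith
        have hT1 := lemA_aux a c (1-θ) ha hacs (by linarith) (by linarith)
        have hT2 := lemA_aux c b θ hc0 hcbs hθ0 hθ1
        set T1 : ℝ := (1-θ)/a + (1-(1-θ))/c - (Real.log c - Real.log a)/(c-a) with hT1d
        set T2 : ℝ := θ/c + (1-θ)/b - (Real.log b - Real.log c)/(b-c) with hT2d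
        have hca : c - a = lam * (b - a) := by rw [hc]; ring
        have hbc : b - c = (1 - lam) * (b - a) := by rw [hc]; ring
        have e1 : lam * T1 = lam*((1-θ)/a) + lam*((1-(1-θ))/c)
            - (Real.log c - Real.log a)/(b-a) := by
          rw [hT1d, hca, div_mul_eq_div_div_swap]
          rw [mul_sub, mul_comm lam ((Real.log c - Real.log a) / (b - a) / lam),
            div_mul_cancel₀ _ (ne_of_gt hl0')]
          ring
        have e2 : (1-lam) * T2 = (1-lam)*(θ/c) + (1-lam)*((1-θ)/b)
            - (Real.log b - Real.log c)/(b-a) := by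
          rw [hT2d, hbc, div_mul_eq_div_div_swap]
          rw [mul_sub, mul_comm (1-lam) ((Real.log b - Real.log c) / (b - a) / (1-lam)),
            div_mul_cancel₀ _ (by linarith : (1:ℝ)-lam ≠ 0)]
          ring
        have hident : (1 - θ) * (lam / a + (1 - lam) / b) + θ / c
            - (Real.log b - Real.log a) / (b - a) = lam * T1 + (1 - lam) * T2 := by
          rw [e1, e2]
          ring
        rw [hident]
        calc |lam * T1 + (1 - lam) * T2| ≤ lam * |T1| + (1 - lam) * |T2| := by
              calc |lam * T1 + (1 - lam) * T2| ≤ |lam * T1| + |(1 - lam) * T2| := abs_add_le _ _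
                _ = lam * |T1| + (1 - lam) * |T2| := by
                    rw [abs_mul, abs_mul, abs_of_pos hl0', abs_of_pos (by linarith : (0:ℝ) < 1 - lam)]
          _ ≤ lam * ((c-a)/a^2 * (((1-θ)^2+(1-(1-θ))^2)/2)) + (1-lam) * ((b-c)/c^2 * Cθ) := by
              apply add_le_add
              · exact mul_le_mul_of_nonneg_left hT1 hl0'.le
              · exact mul_le_mul_of_nonneg_left hT2 (by linarith)
          _ = lam * ((c-a)/a^2 * Cθ) + (1-lam) * ((b-c)/c^2 * Cθ) := by rw [hCθ]; ring
          _ = (b - a) * Cθ * (lam^2 * (a^2)⁻¹ + (1-lam)^2 * (c^2)⁻¹) := by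
              rw [hca, hbc]; ring
  calc |(1 - θ) * (lam / a + (1 - lam) / b) + θ / c - (Real.log b - Real.log a) / (b - a)|
      ≤ (b - a) * Cθ * (lam^2 * (a^2)⁻¹ + (1-lam)^2 * (c^2)⁻¹) := key
    _ ≤ (b - a) * Cp * (lam^2 * (a^2)⁻¹ + (1-lam)^2 * (c^2)⁻¹) := by
        apply mul_le_mul_of_nonneg_right _ (by positivity)
        exact mul_le_mul_of_nonneg_left hCθCp (by linarith)
end
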